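/- arXiv:1104.3774 — 8 statements merged into one kernel-verified Lean document; each statement's English description precedes it below -/
import Mathlib

section
/- Let L be a solvable Lie algebra over a field F, U a subalgebra of L, and S ∈ Ω(U,L) with S ≠ L. Then S equals the intersection of all maximal subalgebras of L that contain S. -/
open LieAlgebra

namespace Paper

variable {F : Type*} [Field F] {L : Type*} [LieRing L] [LieAlgebra F L]

/-- The interval `[U:L]` is complemented: every subalgebra containing `U`
has a complement over `U`. -/
def IsComplementedInterval (U : LieSubalgebra F L) : Prop :=
  ∀ S : LieSubalgebra F L, U ≤ S →
    ∃ T : LieSubalgebra F L, U ≤ T ∧ S ⊓ T = U ∧ S ⊔ T = ⊤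

/-- `Ω(U,L)`. -/
def Omega (U : LieSubalgebra F L) : Set (LieSubalgebra F L) :=
  {S | U ≤ S ∧ IsComplementedInterval S}

/-- `Ω(U,L)_min`, the inclusion-minimal elements. -/
def OmegaMin (U : LieSubalgebra F L) : Set (LieSubalgebra F L) :=
  {S | S ∈ Omega U ∧ ∀ T ∈ Omega U, T ≤ S → T = S}

/-- `φ(U,L)`, the intersection of all maximal subalgebras containing `U`. -/
def phi (U : LieSubalgebra F L) : LieSubalgebra F L :=
  sInf {M : LieSubalgebra F L | IsCoatom M ∧ U ≤ M}

/-- A subalgebra which is an ideal of `L`. -/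
def IsIdealSubalg (A : LieSubalgebra F L) : Prop :=
  ∀ x : L, ∀ a ∈ A, ⁅x, a⁆ ∈ A

/-- A minimal ideal of `L`. -/
def IsMinimalIdeal (A : LieSubalgebra F L) : Prop :=
  A ≠ ⊥ ∧ IsIdealSubalg A ∧
    ∀ B : LieSubalgebra F L, IsIdealSubalg B → B ≤ A → B = ⊥ ∨ B = A

/-- A chief series `0 = A 0 < A 1 < … < A n = L`. -/
def IsChiefSeries (A : ℕ → LieSubalgebra F L) (n : ℕ) : Prop :=
  A 0 = ⊥ ∧ A n = ⊤ ∧ (∀ i, IsIdealSubalg (A i)) ∧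
    ∀ i < n, A i < A (i + 1) ∧
      ∀ B : LieSubalgebra F L, IsIdealSubalg B → A i ≤ B → B ≤ A (i + 1) →
        B = A i ∨ B = A (i + 1)

/-- The chief factor `A/B` is `U`-Frattini. -/
def IsUFrattiniFactor (U B A : LieSubalgebra F L) : Prop :=
  A ≤ phi (U ⊔ B) ∨ U ⊔ B = ⊤

/-- `B` is a `U`-prefrattini subalgebra with respect to the series `A`. -/
def IsPrefrattiniWrt (U : LieSubalgebra F L) (A : ℕ → LieSubalgebra F L) (n : ℕ)
    (B : LieSubalgebra F L) : Prop :=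
  ∃ M : ℕ → LieSubalgebra F L,
    (∀ i < n, ¬ IsUFrattiniFactor U (A i) (A (i + 1)) →
      IsCoatom (M i) ∧ U ⊔ A i ≤ M i ∧ ¬ A (i + 1) ≤ M i) ∧
    B = ⨅ i ∈ {i | i < n ∧ ¬ IsUFrattiniFactor U (A i) (A (i + 1))}, M i

/-- `B` is a `U`-prefrattini subalgebra of `L` (with respect to some chief series). -/
def IsPrefrattini (U B : LieSubalgebra F L) : Prop :=
  ∃ (n : ℕ) (A : ℕ → LieSubalgebra F L), IsChiefSeries A n ∧ IsPrefrattiniWrt U A n B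

/-- The lower central series of an ideal `I` of `L` (computed inside `L`):
`idealLCS I k = I^{k+1}`. -/
def idealLCS (I : LieIdeal F L) : ℕ → LieIdeal F L
  | 0 => I
  | k + 1 => ⁅I, idealLCS I k⁆

/-- The nilpotent residual `L^∞`. -/
def nilpotentResidual (F : Type*) (L : Type*) [Field F] [LieRing L] [LieAlgebra F L] :
    LieIdeal F L :=
  ⨅ k, LieModule.lowerCentralSeries F L L k

/-- The exponential `exp (ad x)` truncated below `p` (all higher terms vanish when
`ad x` has nilpotency index at most `p`). -/
noncomputable def expAd (F : Type*) {L : Type*} [Field F] [LieRing L] [LieAlgebra F L]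
    (p : ℕ) (x : L) : L →ₗ[F] L :=
  ∑ r ∈ Finset.range p, (r.factorial : F)⁻¹ • ((LieAlgebra.ad F L x : Module.End F L) ^ r : Module.End F L)

/-- The quotient map `L → L ⧸ I` as a morphism of Lie algebras. -/
def quotLieHom (I : LieIdeal F L) : L →ₗ⁅F⁆ L ⧸ I :=
  { I.toSubmodule.mkQ with map_lie' := rfl }

end Paper

theorem stmt0 {F : Type*} [Field F] {L : Type*} [LieRing L] [LieAlgebra F L]
    [LieAlgebra.IsSolvable L] [FiniteDimensional F L]
    (U S : LieSubalgebra F L) (hS : S ∈ Paper.Omega U) (hStop : S ≠ ⊤) :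
    S = sInf {M : LieSubalgebra F L | IsCoatom M ∧ S ≤ M} := by
  obtain ⟨-, hcomp⟩ := hS
  set P := sInf {M : LieSubalgebra F L | IsCoatom M ∧ S ≤ M} with hP
  have hSP : S ≤ P := le_sInf fun M hM => hM.2
  obtain ⟨T, hST, hinf, hsup⟩ := hcomp P hSP
  rcases eq_or_ne T ⊤ with rfl | hT
  · rw [← hinf, inf_top_eq]
  · have : IsCoatomic (LieSubalgebra F L) :=
      isCoatomic_of_orderTop_gt_wellFounded (wellFounded_gt)
    obtain ⟨M, hM, hTM⟩ := (this.eq_top_or_exists_le_coatom T).resolve_left hT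
    have hPM : P ≤ M := sInf_le ⟨hM, hST.trans hTM⟩
    exact absurd (top_le_iff.mp (hsup ▸ sup_le hPM hTM)) hM.1
end

section
/- Let L be a solvable Lie algebra, U a subalgebra, I an ideal of L, and S ∈ Ω(U,L). Then S + I ∈ Ω(U,L). -/
open LieAlgebra

lemma mem_sup_of_ideal {F : Type*} [Field F] {L : Type*} [LieRing L] [LieAlgebra F L]
    (W I : LieSubalgebra F L) (hI : Paper.IsIdealSubalg I) {x : L} (hx : x ∈ W ⊔ I) :
    ∃ w ∈ W, ∃ i ∈ I, x = w + i := by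
  let K : LieSubalgebra F L :=
    { toSubmodule := W.toSubmodule ⊔ I.toSubmodule
      lie_mem' := by
        intro a b ha hb
        rcases Submodule.mem_sup.1 ha with ⟨w1, hw1, i1, hi1, rfl⟩
        rcases Submodule.mem_sup.1 hb with ⟨w2, hw2, i2, hi2, rfl⟩
        have : ⁅w1 + i1, w2 + i2⁆ =
            ⁅w1, w2⁆ + (⁅w1, i2⁆ + (⁅i1, w2⁆ + ⁅i1, i2⁆)) := by
          simp [lie_add, add_lie]; abel
        rw [this]
        refine Submodule.mem_sup.2 ⟨⁅w1, w2⁆, W.lie_mem hw1 hw2,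
          _, ?_, rfl⟩
        refine add_mem (hI _ _ hi2) (add_mem ?_ (hI _ _ hi2))
        rw [← lie_skew]
        exact neg_mem (hI _ _ hi1) }
  have hWK : W ≤ K := fun y hy => Submodule.mem_sup_left hy
  have hIK : I ≤ K := fun y hy => Submodule.mem_sup_right hy
  have hle : W ⊔ I ≤ K := sup_le hWK hIK
  have := hle hx
  rcases Submodule.mem_sup.1 this with ⟨w, hw, i, hi, rfl⟩
  exact ⟨w, hw, i, hi, rfl⟩

theorem stmt1 {F : Type*} [Field F] {L : Type*} [LieRing L] [LieAlgebra F L]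
    [LieAlgebra.IsSolvable L] [FiniteDimensional F L]
    (U I S : LieSubalgebra F L) (hI : Paper.IsIdealSubalg I) (hS : S ∈ Paper.Omega U) :
    S ⊔ I ∈ Paper.Omega U := by
  obtain ⟨hUS, hcomp⟩ := hS
  refine ⟨hUS.trans le_sup_left, ?_⟩
  intro T hT
  have hST : S ≤ T := le_sup_left.trans hT
  have hIT : I ≤ T := le_sup_right.trans hT
  obtain ⟨T', hST', hinf, hsup⟩ := hcomp T hST
  refine ⟨T' ⊔ I, sup_le_sup_right hST' I, ?_, ?_⟩
  · apply le_antisymm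
    · rintro x ⟨hxT, hxTI⟩
      obtain ⟨t, ht, i, hi, rfl⟩ := mem_sup_of_ideal T' I hI hxTI
      have htT : t ∈ T := by
        have := sub_mem hxT (hIT hi)
        simpa using this
      have htS : t ∈ S := by
        have : t ∈ T ⊓ T' := ⟨htT, ht⟩
        rwa [hinf] at this
      exact add_mem (le_sup_left (α := LieSubalgebra F L) htS)
        (le_sup_right (α := LieSubalgebra F L) hi)
    · exact le_inf hT (sup_le_sup_right hST' I)
  · rw [← sup_assoc, hsup]
    exact top_le_iff.1 le_sup_left
end

section
/- Let L be a solvable Lie algebra, A a minimal ideal of L, and M a complement of A in L (i.e., L = A ⊕ M as vector spaces with M a subalgebra) containing the subalgebra U. Then Ω(U,M) = {S ∈ Ω(U,L) : S ⊆ M}. -/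
open LieAlgebra

namespace Paper

variable {F : Type*} [Field F] {L : Type*} [LieRing L] [LieAlgebra F L]

/-- `Ω(U,M)`: the analogue of `Ω` computed inside the interval `[U:M]`. -/
def OmegaIn (U T : LieSubalgebra F L) : Set (LieSubalgebra F L) :=
  {S | U ≤ S ∧ S ≤ T ∧ ∀ B : LieSubalgebra F L, S ≤ B → B ≤ T →
    ∃ C : LieSubalgebra F L, S ≤ C ∧ C ≤ T ∧ B ⊓ C = S ∧ B ⊔ C = T}

end Paper

namespace Paper

variable {F : Type*} [Field F] {L : Type*} [LieRing L] [LieAlgebra F L]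

/-- The sup of an ideal with a subalgebra is the submodule sup. -/
lemma sup_coe_submodule_of_ideal {A B : LieSubalgebra F L} (hA : IsIdealSubalg A) :
    ((A ⊔ B : LieSubalgebra F L) : Submodule F L) =
      (A : Submodule F L) ⊔ (B : Submodule F L) := by
  have key : ∀ x y : L, x ∈ (A : Submodule F L) ⊔ (B : Submodule F L) →
      y ∈ (A : Submodule F L) ⊔ (B : Submodule F L) →
      ⁅x, y⁆ ∈ (A : Submodule F L) ⊔ (B : Submodule F L) := by
    intro x y hx hy
    obtain ⟨a, ha, b, hb, rfl⟩ := Submodule.mem_sup.1 hx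
    obtain ⟨a', ha', b', hb', rfl⟩ := Submodule.mem_sup.1 hy
    have h1 : ⁅a, a'⁆ ∈ A := hA a a' ha'
    have h2 : ⁅a, b'⁆ ∈ A := by
      rw [← lie_skew]; exact neg_mem (hA b' a ha)
    have h3 : ⁅b, a'⁆ ∈ A := hA b a' ha'
    have h4 : ⁅b, b'⁆ ∈ B := B.lie_mem hb hb'
    have : ⁅a + b, a' + b'⁆ = (⁅a, a'⁆ + ⁅a, b'⁆ + ⁅b, a'⁆) + ⁅b, b'⁆ := by
      simp only [add_lie, lie_add]; abel
    rw [this]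
    exact Submodule.mem_sup.2 ⟨_, add_mem (add_mem h1 h2) h3, _, h4, rfl⟩
  let N : LieSubalgebra F L :=
    { (A : Submodule F L) ⊔ (B : Submodule F L) with
      lie_mem' := fun {x y} hx hy => key x y hx hy }
  refine le_antisymm ?_ ?_
  · have hle : A ⊔ B ≤ N := sup_le
      (fun x hx => Submodule.mem_sup_left hx)
      (fun x hx => Submodule.mem_sup_right hx)
    exact fun x hx => hle hx
  · exact sup_le
      ((LieSubalgebra.toSubmodule_le_toSubmodule _ _).2 le_sup_left)
      ((LieSubalgebra.toSubmodule_le_toSubmodule _ _).2 le_sup_right)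

/-- A minimal ideal of a solvable Lie algebra is abelian. -/
lemma abelian_of_minimalIdeal [LieAlgebra.IsSolvable L] {A : LieSubalgebra F L}
    (hA : IsMinimalIdeal A) : ∀ a ∈ A, ∀ b ∈ A, ⁅a, b⁆ = (0 : L) := by
  obtain ⟨hne, hI, hmin⟩ := hA
  let I : LieIdeal F L := { (A : Submodule F L) with lie_mem := fun {x m} hm => hI x m hm }
  let D : LieIdeal F L := ⁅I, I⁆
  let Ds : LieSubalgebra F L := { (D : Submodule F L) with
    lie_mem' := fun {x y} _ hy => D.lie_mem hy }
  have hDsI : IsIdealSubalg Ds := fun x a ha => D.lie_mem ha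
  have hDsle : Ds ≤ A := fun x hx => (LieSubmodule.lie_le_left I I) hx
  rcases hmin Ds hDsI hDsle with h | h
  · intro a ha b hb
    have hmemD : ⁅a, b⁆ ∈ D := LieSubmodule.lie_mem_lie (show a ∈ I from ha) (show b ∈ I from hb)
    have hmem : ⁅a, b⁆ ∈ Ds := hmemD
    rw [h] at hmem
    exact (LieSubalgebra.mem_bot _).1 hmem
  · exfalso
    have hDI : D = I := by
      apply LieSubmodule.toSubmodule_injective
      show (Ds : Submodule F L) = (A : Submodule F L)
      rw [h]
    have hk : ∀ k, LieAlgebra.derivedSeriesOfIdeal F L k I = I := by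
      intro k; induction k with
      | zero => exact LieAlgebra.derivedSeriesOfIdeal_zero F L I
      | succ k ih => rw [LieAlgebra.derivedSeriesOfIdeal_succ, ih]; exact hDI
    obtain ⟨k, hks⟩ := LieAlgebra.IsSolvable.solvable (R := F) (L := L)
    have hle : I ≤ ⊥ := by
      rw [← hks, LieAlgebra.derivedSeries_def]
      calc I = LieAlgebra.derivedSeriesOfIdeal F L k I := (hk k).symm
        _ ≤ LieAlgebra.derivedSeriesOfIdeal F L k ⊤ :=
          LieAlgebra.derivedSeriesOfIdeal_mono le_top k
    apply hne
    ext x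
    rw [LieSubalgebra.mem_bot]
    constructor
    · intro hx
      exact (LieSubmodule.mem_bot _).1 (hle hx)
    · rintro rfl; exact A.zero_mem

end Paper

theorem stmt2 {F : Type*} [Field F] {L : Type*} [LieRing L] [LieAlgebra F L]
    [LieAlgebra.IsSolvable L] [FiniteDimensional F L]
    (A M U : LieSubalgebra F L) (hA : Paper.IsMinimalIdeal A)
    (hcompl₁ : A ⊔ M = ⊤) (hcompl₂ : A ⊓ M = ⊥) (hU : U ≤ M) :
    Paper.OmegaIn U M = {S | S ∈ Paper.Omega U ∧ S ≤ M} := by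
  have hI : Paper.IsIdealSubalg A := hA.2.1
  have habel := Paper.abelian_of_minimalIdeal hA
  have hdisj : Disjoint (A : Submodule F L) (M : Submodule F L) := by
    rw [disjoint_iff, ← LieSubalgebra.inf_toSubmodule, hcompl₂,
      LieSubalgebra.bot_toSubmodule]
  have hcodis : Codisjoint (A : Submodule F L) (M : Submodule F L) := by
    rw [codisjoint_iff, ← Paper.sup_coe_submodule_of_ideal hI, hcompl₁,
      LieSubalgebra.top_toSubmodule]
  have hc : IsCompl (A : Submodule F L) (M : Submodule F L) := ⟨hdisj, hcodis⟩
  set π0 := (M : Submodule F L).linearProjOfIsCompl (A : Submodule F L) hc.symm with hπ0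
  set πl : L →ₗ[F] L := (M : Submodule F L).subtype.comp π0 with hπl
  have hmem : ∀ x : L, πl x ∈ M := fun x => (π0 x).2
  have hsubA : ∀ x : L, x - πl x ∈ A := by
    intro x
    have h := Submodule.projection_add_projection_eq_self hc x
    have h2 : (((A : Submodule F L).linearProjOfIsCompl (M : Submodule F L) hc x : L))
        = x - πl x := eq_sub_of_add_eq h
    rw [← h2]
    exact (LieSubalgebra.mem_toSubmodule _).1
      ((A : Submodule F L).linearProjOfIsCompl (M : Submodule F L) hc x).2
  have hfixM : ∀ m ∈ M, πl m = m := by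
    intro m hm
    have h : π0 m = ⟨m, hm⟩ := Submodule.linearProjOfIsCompl_apply_left hc.symm ⟨m, hm⟩
    show ((π0 m : (M : Submodule F L)) : L) = m
    rw [h]
  have hzeroA : ∀ a ∈ A, πl a = 0 := by
    intro a ha
    have h : π0 a = 0 := Submodule.projectionOnto_apply_of_mem_right hc.symm
      ((LieSubalgebra.mem_toSubmodule _).2 ha)
    show ((π0 a : (M : Submodule F L)) : L) = 0
    rw [h]; rfl
  have hlie : ∀ x y : L, πl ⁅x, y⁆ = ⁅πl x, πl y⁆ := by
    intro x y
    have hd : ⁅x, y⁆ - ⁅πl x, πl y⁆ ∈ A := by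
      have e : ⁅x, y⁆ - ⁅πl x, πl y⁆ = ⁅x - πl x, y⁆ + ⁅πl x, y - πl y⁆ := by
        simp only [sub_lie, lie_sub]; abel
      rw [e]
      refine add_mem ?_ (hI (πl x) _ (hsubA y))
      rw [← lie_skew]
      exact neg_mem (hI y _ (hsubA x))
    have hb : ⁅πl x, πl y⁆ ∈ M := M.lie_mem (hmem x) (hmem y)
    have hsplit : πl ⁅x, y⁆ = πl (⁅x, y⁆ - ⁅πl x, πl y⁆) + πl ⁅πl x, πl y⁆ := by
      rw [← map_add]; congr 1; abel
    rw [hsplit, hzeroA _ hd, hfixM _ hb, zero_add]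
  let πh : L →ₗ⁅F⁆ L := { πl with map_lie' := fun {x y} => hlie x y }
  have hπh : ∀ x : L, πh x = πl x := fun _ => rfl
  have hmapfix : ∀ B : LieSubalgebra F L, B ≤ M → LieSubalgebra.map πh B = B := by
    intro B hBM
    ext x
    rw [LieSubalgebra.mem_map]
    constructor
    · rintro ⟨y, hy, rfl⟩
      have hxy : (πh y : L) = y := hfixM y (hBM hy)
      rw [hxy]; exact hy
    · intro hx
      exact ⟨x, hx, hfixM x (hBM hx)⟩
  have hmono := ((LieSubalgebra.gc_map_comap (f := πh))).monotone_l
  have hmapsup : ∀ B C : LieSubalgebra F L,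
      LieSubalgebra.map πh (B ⊔ C) = LieSubalgebra.map πh B ⊔ LieSubalgebra.map πh C :=
    fun B C => ((LieSubalgebra.gc_map_comap (f := πh))).l_sup
  have hmapleM : ∀ B : LieSubalgebra F L, LieSubalgebra.map πh B ≤ M := by
    intro B x hx
    obtain ⟨y, hy, rfl⟩ := (LieSubalgebra.mem_map _ _ _).1 hx
    exact hmem y
  ext S
  simp only [Paper.OmegaIn, Paper.Omega, Paper.IsComplementedInterval, Set.mem_setOf_eq]
  constructor
  · rintro ⟨hUS, hSM, hcomp⟩
    refine ⟨⟨hUS, ?_⟩, hSM⟩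
    intro B hSB
    set Bπ := LieSubalgebra.map πh B with hBπdef
    have hSBπ : S ≤ Bπ := by
      have h := hmono hSB
      rwa [hmapfix S hSM] at h
    obtain ⟨C, hSC, hCM, hinfBC, hsupBC⟩ := hcomp Bπ hSBπ (hmapleM B)
    have hBπle : Bπ ≤ A ⊔ B := by
      intro x hx
      obtain ⟨b, hb, rfl⟩ := (LieSubalgebra.mem_map _ _ _).1 hx
      have h1 : πl b = b - (b - πl b) := by abel
      show πl b ∈ A ⊔ B
      rw [h1]
      exact sub_mem ((le_sup_right : B ≤ A ⊔ B) hb)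
        ((le_sup_left : A ≤ A ⊔ B) (hsubA b))
    have hEtop : A ⊔ (B ⊔ C) = ⊤ := by
      rw [eq_top_iff, ← hcompl₁]
      refine sup_le le_sup_left ?_
      rw [← hsupBC]
      refine sup_le (hBπle.trans (sup_le_sup_left le_sup_left A)) ?_
      exact (le_sup_right : C ≤ B ⊔ C).trans le_sup_right
    have hKideal : Paper.IsIdealSubalg (A ⊓ (B ⊔ C)) := by
      intro x v hv
      rw [LieSubalgebra.mem_inf] at hv ⊢
      obtain ⟨hv1, hv2⟩ := hv
      have hx : x ∈ (A : Submodule F L) ⊔ ((B ⊔ C : LieSubalgebra F L) : Submodule F L) := by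
        rw [← Paper.sup_coe_submodule_of_ideal hI, hEtop, LieSubalgebra.top_toSubmodule]
        exact Submodule.mem_top
      obtain ⟨a, ha, e, he, rfl⟩ := Submodule.mem_sup.1 hx
      have h0 : ⁅a, v⁆ = 0 := habel a ((LieSubalgebra.mem_toSubmodule _).1 ha) v hv1
      have hle : ⁅a + e, v⁆ = ⁅e, v⁆ := by rw [add_lie, h0, zero_add]
      rw [hle]
      exact ⟨hI e v hv1, (B ⊔ C).lie_mem ((LieSubalgebra.mem_toSubmodule _).1 he) hv2⟩
    rcases hA.2.2 _ hKideal inf_le_left with hK | hK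
    · -- A ⊓ (B ⊔ C) = ⊥ : use A ⊔ C
      refine ⟨A ⊔ C, hSC.trans le_sup_right, ?_, ?_⟩
      · refine le_antisymm ?_ (le_inf hSB (hSC.trans le_sup_right))
        intro x hx
        rw [LieSubalgebra.mem_inf] at hx
        obtain ⟨hxB, hxAC⟩ := hx
        have hx2 : x ∈ (A : Submodule F L) ⊔ (C : Submodule F L) := by
          rw [← Paper.sup_coe_submodule_of_ideal hI]
          exact (LieSubalgebra.mem_toSubmodule _).2 hxAC
        obtain ⟨a, ha, c, hc, rfl⟩ := Submodule.mem_sup.1 hx2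
        have haA : a ∈ A := (LieSubalgebra.mem_toSubmodule _).1 ha
        have hcC : c ∈ C := (LieSubalgebra.mem_toSubmodule _).1 hc
        have hπx : πl (a + c) = c := by
          rw [map_add, hzeroA a haA, hfixM c (hCM hcC), zero_add]
        have hcBπ : c ∈ Bπ := by
          rw [hBπdef, LieSubalgebra.mem_map]
          exact ⟨a + c, hxB, hπx⟩
        have hcS : c ∈ S := by
          rw [← hinfBC]
          exact (LieSubalgebra.mem_inf _ _ _).2 ⟨hcBπ, hcC⟩
        have haB : a ∈ B := by
          have he : a = (a + c) - c := by abel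
          rw [he]
          exact sub_mem hxB (hSB hcS)
        have haK : a ∈ A ⊓ (B ⊔ C) :=
          (LieSubalgebra.mem_inf _ _ _).2 ⟨haA, (le_sup_left : B ≤ B ⊔ C) haB⟩
        rw [hK] at haK
        have ha0 : a = 0 := (LieSubalgebra.mem_bot _).1 haK
        rw [ha0, zero_add]
        exact hcS
      · have hcomm : B ⊔ (A ⊔ C) = A ⊔ (B ⊔ C) := sup_left_comm B A C
        rw [hcomm, hEtop]
    · -- A ⊓ (B ⊔ C) = A : use C
      refine ⟨C, hSC, ?_, ?_⟩
      · refine le_antisymm ?_ (le_inf hSB hSC)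
        intro x hx
        rw [LieSubalgebra.mem_inf] at hx
        obtain ⟨hxB, hxC⟩ := hx
        have hxBπ : x ∈ Bπ := by
          rw [hBπdef, LieSubalgebra.mem_map]
          exact ⟨x, hxB, hfixM x (hCM hxC)⟩
        rw [← hinfBC]
        exact (LieSubalgebra.mem_inf _ _ _).2 ⟨hxBπ, hxC⟩
      · have hAle : A ≤ B ⊔ C := hK ▸ inf_le_right
        rw [eq_top_iff, ← hEtop]
        exact sup_le hAle le_rfl
  · rintro ⟨⟨hUS, hcomp⟩, hSM⟩
    refine ⟨hUS, hSM, ?_⟩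
    intro B hSB hBM
    obtain ⟨C, hSC, hinf, hsup⟩ := hcomp (A ⊔ B) (hSB.trans le_sup_right)
    have hSCπ : S ≤ LieSubalgebra.map πh C := by
      have h := hmono hSC
      rwa [hmapfix S hSM] at h
    refine ⟨LieSubalgebra.map πh C, hSCπ, hmapleM C, ?_, ?_⟩
    · refine le_antisymm ?_ (le_inf hSB hSCπ)
      intro x hx
      rw [LieSubalgebra.mem_inf] at hx
      obtain ⟨hxB, hxC⟩ := hx
      obtain ⟨c, hc, rfl⟩ := (LieSubalgebra.mem_map _ _ _).1 hxC
      have hcAB : c ∈ A ⊔ B := by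
        rw [← LieSubalgebra.mem_toSubmodule, Paper.sup_coe_submodule_of_ideal hI]
        refine Submodule.mem_sup.2 ⟨c - πl c, (LieSubalgebra.mem_toSubmodule _).2 (hsubA c),
          πl c, (LieSubalgebra.mem_toSubmodule _).2 hxB, sub_add_cancel c (πl c)⟩
      have hcS : c ∈ S := by
        rw [← hinf]
        exact (LieSubalgebra.mem_inf _ _ _).2 ⟨hcAB, hc⟩
      show πl c ∈ S
      rw [hfixM c (hSM hcS)]
      exact hcS
    · refine le_antisymm (sup_le hBM (hmapleM C)) ?_
      intro m hm
      have htop : A ⊔ (B ⊔ C) = ⊤ := by rw [← sup_assoc, hsup]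
      have hm2 : m ∈ (A : Submodule F L) ⊔ ((B ⊔ C : LieSubalgebra F L) : Submodule F L) := by
        rw [← Paper.sup_coe_submodule_of_ideal hI, htop, LieSubalgebra.top_toSubmodule]
        exact Submodule.mem_top
      obtain ⟨a, ha, w, hw, rfl⟩ := Submodule.mem_sup.1 hm2
      have haA : a ∈ A := (LieSubalgebra.mem_toSubmodule _).1 ha
      have hwBC : w ∈ B ⊔ C := (LieSubalgebra.mem_toSubmodule _).1 hw
      have hπaw : πl (a + w) = πl w := by rw [map_add, hzeroA a haA, zero_add]
      have hmem' : πl w ∈ LieSubalgebra.map πh (B ⊔ C) := by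
        rw [LieSubalgebra.mem_map]
        exact ⟨w, hwBC, rfl⟩
      rw [hmapsup B C, hmapfix B hBM] at hmem'
      have heq : a + w = πl w := by
        rw [← hπaw, hfixM _ hm]
      rw [heq]
      exact hmem'
end

section
/- Let L be a solvable Lie algebra, A a minimal ideal of L, U a subalgebra, and S a minimal element of Ω(U,L) with A ⊄ S. Then there is a maximal subalgebra M of L containing S with A ⊄ M. -/
open LieAlgebra

theorem stmt3 {F : Type*} [Field F] {L : Type*} [LieRing L] [LieAlgebra F L]
    [LieAlgebra.IsSolvable L] [FiniteDimensional F L]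
    (A U S : LieSubalgebra F L) (hA : Paper.IsMinimalIdeal A)
    (hS : S ∈ Paper.OmegaMin U) (hAS : ¬ A ≤ S) :
    ∃ M : LieSubalgebra F L, IsCoatom M ∧ S ≤ M ∧ ¬ A ≤ M := by
  obtain ⟨⟨hUS, hcomp⟩, -⟩ := hS
  obtain ⟨C, hSC, hinf, hsup⟩ := hcomp (S ⊔ A) le_sup_left
  have hAC : ¬ A ≤ C := fun h => hAS (by
    have h2 : A ≤ (S ⊔ A) ⊓ C := le_inf le_sup_right h
    rwa [hinf] at h2)
  have htop : A ⊔ C = ⊤ := by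
    rw [← hsup, sup_comm S A, sup_assoc, sup_eq_right.mpr hSC]
  set P : Set (LieSubalgebra F L) := {D | C ≤ D ∧ ¬ A ≤ D} with hP
  have hCP : C ∈ P := ⟨le_rfl, hAC⟩
  have hbdd : BddAbove ((fun D : LieSubalgebra F L => Module.finrank F D.toSubmodule) '' P) := by
    refine ⟨Module.finrank F L, ?_⟩
    rintro n ⟨D, -, rfl⟩
    exact Submodule.finrank_le _
  have hne : (((fun D : LieSubalgebra F L => Module.finrank F D.toSubmodule)) '' P).Nonempty :=
    ⟨_, ⟨C, hCP, rfl⟩⟩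
  obtain ⟨M, hMP, hMr⟩ : ∃ M ∈ P,
      sSup (((fun D : LieSubalgebra F L => Module.finrank F D.toSubmodule)) '' P)
        = Module.finrank F M.toSubmodule := by
    have := Nat.sSup_mem hne hbdd
    obtain ⟨M, hMP, hMeq⟩ := this
    exact ⟨M, hMP, hMeq.symm⟩
  have hmax : ∀ N ∈ P, Module.finrank F N.toSubmodule ≤ Module.finrank F M.toSubmodule := by
    intro N hN
    rw [← hMr]
    exact le_csSup hbdd ⟨N, hN, rfl⟩
  refine ⟨M, ⟨?_, ?_⟩, hSC.trans hMP.1, hMP.2⟩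
  · intro h
    exact hMP.2 (h ▸ le_top)
  · intro N hMN
    by_cases hAN : A ≤ N
    · have : (⊤ : LieSubalgebra F L) ≤ N := by
        rw [← htop]
        exact sup_le hAN (hMP.1.trans hMN.le)
      exact top_le_iff.mp this
    · exfalso
      have hNP : N ∈ P := ⟨hMP.1.trans hMN.le, hAN⟩
      have hlt : M.toSubmodule < N.toSubmodule := by
        rw [lt_iff_le_and_ne]
        exact ⟨hMN.le, fun h => hMN.ne (LieSubalgebra.toSubmodule_injective h)⟩
      exact absurd (hmax N hNP) (not_le.mpr (Submodule.finrank_lt_finrank_of_lt hlt))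
end

section
/- Let L be a solvable Lie algebra, A a minimal ideal of L, and U a subalgebra of L. The following are equivalent: (i) A ⊄ S for some S ∈ Ω(U,L)_min; (ii) A ⊄ M for some maximal subalgebra M of L containing U; (iii) for every S ∈ Ω(U,L)_min there exists a complement of A in L containing S. -/
open LieAlgebra

section Aux

variable {F : Type*} [Field F] {L : Type*} [LieRing L] [LieAlgebra F L]

theorem paperAux_sup_toSubmodule {A M : LieSubalgebra F L} (hA : Paper.IsIdealSubalg A) :
    (↑(A ⊔ M) : Submodule F L) = (A : Submodule F L) ⊔ (M : Submodule F L) := by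
  refine le_antisymm ?_ ?_
  · let P : LieSubalgebra F L :=
      { toSubmodule := (A : Submodule F L) ⊔ (M : Submodule F L)
        lie_mem' := by
          intro x y hx hy
          have hx' : x ∈ (A : Submodule F L) ⊔ (M : Submodule F L) := hx
          have hy' : y ∈ (A : Submodule F L) ⊔ (M : Submodule F L) := hy
          clear hx hy
          rw [Submodule.mem_sup] at hx' hy'
          obtain ⟨a, ha, m, hm, rfl⟩ := hx'
          obtain ⟨b, hb, n, hn, rfl⟩ := hy'
          have h1 : ⁅a + m, b⁆ ∈ A := hA (a + m) b hb
          have h2 : ⁅a, n⁆ ∈ A := by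
            rw [← lie_skew]
            exact A.toSubmodule.neg_mem (hA n a ha)
          have h3 : ⁅m, n⁆ ∈ M := M.lie_mem hm hn
          have : ⁅a + m, b + n⁆ = (⁅a + m, b⁆ + ⁅a, n⁆) + ⁅m, n⁆ := by
            rw [lie_add, add_lie, add_lie]; abel
          show ⁅a + m, b + n⁆ ∈ (A : Submodule F L) ⊔ (M : Submodule F L)
          rw [this]
          exact add_mem (Submodule.mem_sup_left (add_mem h1 h2)) (Submodule.mem_sup_right h3) }
    have hAP : A ≤ P := fun x hx => Submodule.mem_sup_left hx
    have hMP : M ≤ P := fun x hx => Submodule.mem_sup_right hx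
    exact fun x hx => (sup_le hAP hMP : A ⊔ M ≤ P) hx
  · exact sup_le (fun x hx => le_sup_left (a := A) (b := M) hx)
      (fun x hx => le_sup_right (a := A) (b := M) hx)

theorem paperAux_mem_sup {A M : LieSubalgebra F L} (hA : Paper.IsIdealSubalg A) (x : L) :
    x ∈ A ⊔ M ↔ ∃ a ∈ A, ∃ m ∈ M, a + m = x := by
  have h : x ∈ A ⊔ M ↔ x ∈ (↑(A ⊔ M) : Submodule F L) := Iff.rfl
  rw [h, paperAux_sup_toSubmodule hA, Submodule.mem_sup]
  rfl

theorem paperAux_abelian [LieAlgebra.IsSolvable L] {A : LieSubalgebra F L}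
    (hA : Paper.IsMinimalIdeal A) : ∀ a ∈ A, ∀ b ∈ A, ⁅a, b⁆ = (0 : L) := by
  obtain ⟨hbot, hid, hmin⟩ := hA
  set g : Set L := {z | ∃ a ∈ A, ∃ b ∈ A, ⁅a, b⁆ = z} with hg
  set Dsub : Submodule F L := Submodule.span F g with hDsub
  have had : ∀ x : L, ∀ d ∈ Dsub, ⁅x, d⁆ ∈ Dsub := by
    intro x d hd
    have : Dsub ≤ Submodule.comap (LieAlgebra.ad F L x : L →ₗ[F] L) Dsub := by
      rw [hDsub, Submodule.span_le]
      rintro z ⟨a, ha, b, hb, rfl⟩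
      show ⁅x, ⁅a, b⁆⁆ ∈ Dsub
      rw [leibniz_lie]
      refine add_mem ?_ ?_
      · exact Submodule.subset_span ⟨⁅x, a⁆, hid x a ha, b, hb, rfl⟩
      · exact Submodule.subset_span ⟨a, ha, ⁅x, b⁆, hid x b hb, rfl⟩
    exact this hd
  let D : LieSubalgebra F L := { toSubmodule := Dsub, lie_mem' := fun {x y} hx hy => had x y hy }
  have hDid : Paper.IsIdealSubalg D := fun x a ha => had x a ha
  have hDA : D ≤ A := by
    intro z hz
    have : Dsub ≤ A.toSubmodule := by
      rw [hDsub, Submodule.span_le]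
      rintro w ⟨a, ha, b, hb, rfl⟩
      exact hid a b hb
    exact this hz
  rcases hmin D hDid hDA with h | h
  · intro a ha b hb
    have : ⁅a, b⁆ ∈ D := Submodule.subset_span ⟨a, ha, b, hb, rfl⟩
    rw [h] at this
    simpa using this
  · exfalso
    have key : ∀ k, A.toSubmodule ≤ ((derivedSeries F L k : LieIdeal F L) : Submodule F L) := by
      intro k
      induction k with
      | zero => simp [derivedSeries_def, derivedSeriesOfIdeal_zero]
      | succ k ih =>
        have hAD : A.toSubmodule = Dsub := by rw [← h]
        rw [hAD, hDsub, Submodule.span_le]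
        rintro z ⟨a, ha, b, hb, rfl⟩
        have h1 : a ∈ derivedSeries F L k := ih ha
        have h2 : b ∈ derivedSeries F L k := ih hb
        have hm : ⁅a, b⁆ ∈ ⁅derivedSeries F L k, derivedSeries F L k⁆ :=
          LieSubmodule.lie_mem_lie h1 h2
        have hstep : derivedSeries F L (k + 1) = ⁅derivedSeries F L k, derivedSeries F L k⁆ := by
          rw [derivedSeries_def, derivedSeriesOfIdeal_succ, ← derivedSeries_def]
        show ⁅a, b⁆ ∈ derivedSeries F L (k + 1)
        rw [hstep]
        exact hm
    obtain ⟨k, hk⟩ := LieAlgebra.IsSolvable.solvable (R := F) (L := L)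
    have hb2 : A.toSubmodule ≤ ⊥ := by
      have h2 := key k
      rw [hk] at h2
      simpa using h2
    apply hbot
    rw [← LieSubalgebra.toSubmodule_inj]
    exact le_antisymm (by simpa using hb2) bot_le

theorem paperAux_inter [LieAlgebra.IsSolvable L] {A : LieSubalgebra F L}
    (hA : Paper.IsMinimalIdeal A) {X : LieSubalgebra F L} (hX : A ⊔ X = ⊤) :
    A ⊓ X = ⊥ ∨ A ≤ X := by
  have habel := paperAux_abelian hA
  obtain ⟨hbot, hid, hmin⟩ := hA
  have hidAX : Paper.IsIdealSubalg (A ⊓ X) := by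
    intro y z hz
    rw [LieSubalgebra.mem_inf] at hz
    have hy : y ∈ A ⊔ X := by rw [hX]; exact LieSubalgebra.mem_top y
    obtain ⟨a, ha, m, hm, rfl⟩ := (paperAux_mem_sup hid y).mp hy
    have h0 : ⁅a, z⁆ = (0 : L) := habel a ha z hz.1
    have heq : ⁅a + m, z⁆ = ⁅m, z⁆ := by rw [add_lie, h0, zero_add]
    rw [heq, LieSubalgebra.mem_inf]
    exact ⟨hid m z hz.1, X.lie_mem hm hz.2⟩
  rcases hmin (A ⊓ X) hidAX inf_le_left with h | h
  · exact Or.inl h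
  · exact Or.inr (by rw [← h]; exact inf_le_right)

theorem paperAux_coatom [LieAlgebra.IsSolvable L] {A : LieSubalgebra F L}
    (hA : Paper.IsMinimalIdeal A) {M : LieSubalgebra F L}
    (h1 : A ⊔ M = ⊤) (h2 : A ⊓ M = ⊥) : IsCoatom M := by
  constructor
  · intro htop
    apply hA.1
    rw [htop, inf_top_eq] at h2
    exact h2
  · intro K hMK
    have hAK : A ⊔ K = ⊤ := by
      rw [eq_top_iff, ← h1]
      exact sup_le_sup_left hMK.le _
    rcases paperAux_inter hA hAK with h | h
    · exfalso
      apply hMK.not_ge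
      intro x hx
      have hx' : x ∈ A ⊔ M := by rw [h1]; exact LieSubalgebra.mem_top x
      obtain ⟨a, ha, m, hm, rfl⟩ := (paperAux_mem_sup hA.2.1 x).mp hx'
      have haK : a ∈ K := by
        have : (a + m) - m ∈ K := K.toSubmodule.sub_mem hx (hMK.le hm)
        simpa using this
      have : a ∈ A ⊓ K := (LieSubalgebra.mem_inf (K := A) (K' := K) a).mpr ⟨ha, haK⟩
      rw [h] at this
      rw [LieSubalgebra.mem_bot] at this
      rw [this, zero_add]
      exact hm
    · rw [eq_top_iff, ← hAK]
      exact sup_le h le_rfl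

theorem paperAux_complement [LieAlgebra.IsSolvable L] {A : LieSubalgebra F L}
    (hA : Paper.IsMinimalIdeal A) {S : LieSubalgebra F L}
    (hc : Paper.IsComplementedInterval S) (hAS : ¬ A ≤ S) :
    ∃ T : LieSubalgebra F L, A ⊔ T = ⊤ ∧ A ⊓ T = ⊥ ∧ S ≤ T := by
  obtain ⟨T, hST, hinf, hsup⟩ := hc (A ⊔ S) le_sup_right
  have hAT : A ⊔ T = ⊤ := by
    rw [eq_top_iff, ← hsup]
    exact sup_le (sup_le le_sup_left (le_trans hST le_sup_right)) le_sup_right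
  rcases paperAux_inter hA hAT with h | h
  · exact ⟨T, hAT, h, hST⟩
  · exfalso
    apply hAS
    have h3 : A ≤ (A ⊔ S) ⊓ T := le_inf le_sup_left h
    rwa [hinf] at h3

theorem paperAux_min_exists [FiniteDimensional F L] (U : LieSubalgebra F L) :
    ∃ S, S ∈ Paper.OmegaMin U := by
  have htop : (⊤ : LieSubalgebra F L) ∈ Paper.Omega U := by
    refine ⟨le_top, ?_⟩
    intro S hS
    have hS' : S = ⊤ := top_le_iff.mp hS
    exact ⟨⊤, le_rfl, by simp [hS'], by simp⟩
  let N : Set ℕ := {n | ∃ S ∈ Paper.Omega U, Module.finrank F S.toSubmodule = n}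
  have hN : N.Nonempty := ⟨_, ⊤, htop, rfl⟩
  obtain ⟨S, hS, hrank⟩ := Nat.sInf_mem hN
  refine ⟨S, hS, ?_⟩
  intro T hT hTS
  by_contra hne
  have hlt : T.toSubmodule < S.toSubmodule := by
    refine lt_of_le_of_ne ?_ ?_
    · exact (LieSubalgebra.toSubmodule_le_toSubmodule T S).mpr hTS
    · intro he
      exact hne ((LieSubalgebra.toSubmodule_inj T S).mp he)
  have hfr := Submodule.finrank_lt_finrank_of_lt hlt
  have hmem : Module.finrank F T.toSubmodule ∈ N := ⟨T, hT, rfl⟩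
  have hle := Nat.sInf_le hmem
  omega

end Aux


theorem stmt4 {F : Type*} [Field F] {L : Type*} [LieRing L] [LieAlgebra F L]
    [LieAlgebra.IsSolvable L] [FiniteDimensional F L]
    (A U : LieSubalgebra F L) (hA : Paper.IsMinimalIdeal A) :
    ((∃ S ∈ Paper.OmegaMin U, ¬ A ≤ S) ↔
      (∃ M : LieSubalgebra F L, IsCoatom M ∧ U ≤ M ∧ ¬ A ≤ M)) ∧
    ((∃ M : LieSubalgebra F L, IsCoatom M ∧ U ≤ M ∧ ¬ A ≤ M) ↔
      (∀ S ∈ Paper.OmegaMin U, ∃ M : LieSubalgebra F L,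
        A ⊔ M = ⊤ ∧ A ⊓ M = ⊥ ∧ S ≤ M)) := by
  have hbot := hA.1
  have hidA := hA.2.1
  have habel := paperAux_abelian hA
  -- if A has a complement T, then ¬ A ≤ T
  have hnleT : ∀ T : LieSubalgebra F L, A ⊓ T = ⊥ → ¬ A ≤ T := by
    intro T h2 hle
    apply hbot
    rw [← h2]
    exact le_antisymm (le_inf le_rfl hle) inf_le_left
  -- (i) → (ii)
  have impl1 : (∃ S ∈ Paper.OmegaMin U, ¬ A ≤ S) →
      ∃ M : LieSubalgebra F L, IsCoatom M ∧ U ≤ M ∧ ¬ A ≤ M := by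
    rintro ⟨S, ⟨⟨hUS, hc⟩, _⟩, hAS⟩
    obtain ⟨T, h1, h2, hST⟩ := paperAux_complement hA hc hAS
    exact ⟨T, paperAux_coatom hA h1 h2, le_trans hUS hST, hnleT T h2⟩
  -- (ii) → (iii)
  have impl2 : (∃ M : LieSubalgebra F L, IsCoatom M ∧ U ≤ M ∧ ¬ A ≤ M) →
      ∀ S ∈ Paper.OmegaMin U, ∃ M : LieSubalgebra F L,
        A ⊔ M = ⊤ ∧ A ⊓ M = ⊥ ∧ S ≤ M := by
    rintro ⟨M₀, hcoM₀, hUM₀, hAM₀⟩ S hSmin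
    obtain ⟨⟨hUS, hc⟩, hminS⟩ := hSmin
    have hltM₀ : M₀ < A ⊔ M₀ := by
      refine lt_of_le_of_ne le_sup_right ?_
      intro h
      exact hAM₀ (by rw [h]; exact le_sup_left)
    have hsup0 : A ⊔ M₀ = ⊤ := hcoM₀.2 _ hltM₀
    -- key claim : ¬ A ≤ S
    have hAS : ¬ A ≤ S := by
      intro hASle
      set D := S ⊓ M₀ with hD
      have hUD : U ≤ D := le_inf hUS hUM₀
      -- S ≤ A ⊔ D
      have hSD : S ≤ A ⊔ D := by
        intro x hx
        have hx' : x ∈ A ⊔ M₀ := by rw [hsup0]; exact LieSubalgebra.mem_top x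
        obtain ⟨a, ha, m, hm, rfl⟩ := (paperAux_mem_sup hidA x).mp hx'
        have hmS : m ∈ S := by
          have h := S.toSubmodule.sub_mem hx (hASle ha)
          simpa using h
        have hmD : m ∈ D := (LieSubalgebra.mem_inf (K := S) (K' := M₀) m).mpr ⟨hmS, hm⟩
        exact (A ⊔ D).add_mem (le_sup_left (a := A) (b := D) ha)
          (le_sup_right (a := A) (b := D) hmD)
      have hDomega : D ∈ Paper.Omega U := by
        refine ⟨hUD, ?_⟩
        intro B hDB
        have hSAB : S ≤ A ⊔ B := le_trans hSD (sup_le_sup_left hDB _)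
        obtain ⟨T, hST, hinfT, hsupT⟩ := hc (A ⊔ B) hSAB
        set C := T ⊓ M₀ with hC
        have hDC : D ≤ C := le_inf (le_trans inf_le_left hST) inf_le_right
        have hBC : B ⊓ C = D := by
          apply le_antisymm
          · intro x hx
            rw [LieSubalgebra.mem_inf] at hx
            obtain ⟨hxB, hxC⟩ := hx
            rw [LieSubalgebra.mem_inf] at hxC
            have hxS : x ∈ S := by
              rw [← hinfT, LieSubalgebra.mem_inf]
              exact ⟨le_sup_right (a := A) (b := B) hxB, hxC.1⟩
            rw [hD, LieSubalgebra.mem_inf]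
            exact ⟨hxS, hxC.2⟩
          · exact le_inf hDB hDC
        have hTAC : T ≤ A ⊔ C := by
          intro x hx
          have hx' : x ∈ A ⊔ M₀ := by rw [hsup0]; exact LieSubalgebra.mem_top x
          obtain ⟨a, ha, m, hm, rfl⟩ := (paperAux_mem_sup hidA x).mp hx'
          have hmT : m ∈ T := by
            have haT : a ∈ T := hST (hASle ha)
            have h := T.toSubmodule.sub_mem hx haT
            simpa using h
          have hmC : m ∈ C := (LieSubalgebra.mem_inf (K := T) (K' := M₀) m).mpr ⟨hmT, hm⟩
          exact (A ⊔ C).add_mem (le_sup_left (a := A) (b := C) ha)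
            (le_sup_right (a := A) (b := C) hmC)
        have hsupABC : A ⊔ (B ⊔ C) = ⊤ := by
          rw [eq_top_iff, ← hsupT]
          refine sup_le (sup_le le_sup_left ?_) ?_
          · exact le_trans le_sup_left le_sup_right
          · exact le_trans hTAC (sup_le le_sup_left (le_trans le_sup_right le_sup_right))
        rcases paperAux_inter hA hsupABC with hzero | hle
        · refine ⟨A ⊔ C, le_trans hDC le_sup_right, ?_, ?_⟩
          · apply le_antisymm
            · intro x hx
              rw [LieSubalgebra.mem_inf] at hx
              obtain ⟨hxB, hxAC⟩ := hx
              obtain ⟨a, ha, c, hcC, rfl⟩ := (paperAux_mem_sup hidA _).mp hxAC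
              have haBC : a ∈ A ⊓ (B ⊔ C) := by
                rw [LieSubalgebra.mem_inf]
                refine ⟨ha, ?_⟩
                have h := (B ⊔ C).toSubmodule.sub_mem
                  (le_sup_left (a := B) (b := C) hxB)
                  (le_sup_right (a := B) (b := C) hcC)
                simpa using h
              rw [hzero, LieSubalgebra.mem_bot] at haBC
              rw [haBC, zero_add]
              rw [haBC, zero_add] at hxB
              rw [← hBC, LieSubalgebra.mem_inf]
              exact ⟨hxB, hcC⟩
            · exact le_inf hDB (le_trans hDC le_sup_right)
          · rw [eq_top_iff, ← hsupABC]
            refine sup_le (le_trans le_sup_left le_sup_right) (sup_le le_sup_left ?_)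
            exact le_trans le_sup_right le_sup_right
        · refine ⟨C, hDC, hBC, ?_⟩
          rw [eq_top_iff, ← hsupABC]
          exact sup_le hle le_rfl
      have hDS : D = S := hminS D hDomega inf_le_left
      apply hAM₀
      calc A ≤ S := hASle
        _ = D := hDS.symm
        _ ≤ M₀ := inf_le_right
    obtain ⟨T, h1, h2, hST⟩ := paperAux_complement hA hc hAS
    exact ⟨T, h1, h2, hST⟩
  -- (iii) → (ii)
  have impl3 : (∀ S ∈ Paper.OmegaMin U, ∃ M : LieSubalgebra F L,
      A ⊔ M = ⊤ ∧ A ⊓ M = ⊥ ∧ S ≤ M) →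
      ∃ M : LieSubalgebra F L, IsCoatom M ∧ U ≤ M ∧ ¬ A ≤ M := by
    intro h
    obtain ⟨S, hS⟩ := paperAux_min_exists U
    obtain ⟨M, h1, h2, hSM⟩ := h S hS
    exact ⟨M, paperAux_coatom hA h1 h2, le_trans hS.1.1 hSM, hnleT M h2⟩
  -- (ii) → (i)
  have impl4 : (∃ M : LieSubalgebra F L, IsCoatom M ∧ U ≤ M ∧ ¬ A ≤ M) →
      ∃ S ∈ Paper.OmegaMin U, ¬ A ≤ S := by
    intro hii
    obtain ⟨S, hS⟩ := paperAux_min_exists U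
    obtain ⟨T, h1, h2, hST⟩ := impl2 hii S hS
    exact ⟨S, hS, fun hle => hnleT T h2 (le_trans hle hST)⟩
  exact ⟨⟨impl1, impl4⟩, ⟨impl2, impl3⟩⟩
end

section
/- Let L be a solvable Lie algebra, A an ideal of L, U a subalgebra, and S ∈ Ω(U,L)_min. Then S + A ∈ Ω(U+A, L)_min. -/
open LieAlgebra

section Stmt5Aux

open Paper Module

variable {F : Type*} [Field F] {L : Type*} [LieRing L] [LieAlgebra F L]

theorem toSm_le {X Y : LieSubalgebra F L} (h : X ≤ Y) :
    (X : Submodule F L) ≤ (Y : Submodule F L) := fun x hx => h hx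

/-- The join of a subalgebra with an ideal is the submodule sum. -/
theorem sup_toSubmodule {X A : LieSubalgebra F L} (hA : Paper.IsIdealSubalg A) :
    ((X ⊔ A : LieSubalgebra F L) : Submodule F L) = (X : Submodule F L) ⊔ (A : Submodule F L) := by
  set K : LieSubalgebra F L :=
    { toSubmodule := (X : Submodule F L) ⊔ (A : Submodule F L)
      lie_mem' := by
        intro x y hx hy
        have hx' : x ∈ (X : Submodule F L) ⊔ (A : Submodule F L) := hx
        have hy' : y ∈ (X : Submodule F L) ⊔ (A : Submodule F L) := hy
        obtain ⟨x1, hx1, a1, ha1, rfl⟩ := Submodule.mem_sup.1 hx'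
        obtain ⟨x2, hx2, a2, ha2, rfl⟩ := Submodule.mem_sup.1 hy'
        show ⁅x1 + a1, x2 + a2⁆ ∈ (X : Submodule F L) ⊔ (A : Submodule F L)
        rw [add_lie, lie_add, lie_add]
        have hx1' : x1 ∈ X := hx1
        have hx2' : x2 ∈ X := hx2
        have h1 : ⁅x1, x2⁆ ∈ (X : Submodule F L) := X.lie_mem hx1' hx2'
        have h2 : ⁅x1, a2⁆ ∈ (A : Submodule F L) := hA x1 a2 ha2
        have h3 : ⁅a1, x2⁆ ∈ (A : Submodule F L) := by
          have h0 : ⁅x2, a1⁆ ∈ A := hA x2 a1 ha1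
          have h' : (-⁅x2, a1⁆) ∈ A := A.neg_mem h0
          show ⁅a1, x2⁆ ∈ A
          rw [← lie_skew x2 a1] at h'
          simpa using h'
        have h4 : ⁅a1, a2⁆ ∈ (A : Submodule F L) := hA a1 a2 ha2
        exact add_mem (add_mem (Submodule.mem_sup_left h1) (Submodule.mem_sup_right h2))
          (add_mem (Submodule.mem_sup_right h3) (Submodule.mem_sup_right h4)) } with hK
  have h1 : X ⊔ A ≤ K := by
    apply sup_le
    · intro x hx; exact Submodule.mem_sup_left hx
    · intro a ha; exact Submodule.mem_sup_right ha
  have h2 : (K : Submodule F L) ≤ ((X ⊔ A : LieSubalgebra F L) : Submodule F L) := by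
    apply sup_le
    · exact toSm_le (le_sup_left : X ≤ X ⊔ A)
    · exact toSm_le (le_sup_right : A ≤ X ⊔ A)
  exact le_antisymm (fun x hx => h1 hx) h2

theorem mem_sup_ideal {X A : LieSubalgebra F L} (hA : Paper.IsIdealSubalg A) {z : L} :
    z ∈ X ⊔ A ↔ ∃ x ∈ X, ∃ a ∈ A, x + a = z := by
  rw [← LieSubalgebra.mem_toSubmodule, sup_toSubmodule hA, Submodule.mem_sup]
  rfl

/-- Modular law: if `A ≤ B` with `A` an ideal then `B ⊓ (C ⊔ A) = (B ⊓ C) ⊔ A`. -/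
theorem inf_sup_ideal {A B C : LieSubalgebra F L} (hA : Paper.IsIdealSubalg A) (hAB : A ≤ B) :
    B ⊓ (C ⊔ A) = (B ⊓ C) ⊔ A := by
  apply le_antisymm
  · intro z hz
    obtain ⟨hzB, hzCA⟩ := (LieSubalgebra.mem_inf _ _ _).1 hz
    obtain ⟨c, hc, a, ha, rfl⟩ := (mem_sup_ideal hA).1 hzCA
    have hcB : c ∈ B := by
      have := B.sub_mem hzB (hAB ha)
      simpa using this
    exact (mem_sup_ideal hA).2 ⟨c, (LieSubalgebra.mem_inf _ _ _).2 ⟨hcB, hc⟩, a, ha, rfl⟩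
  · exact sup_le (le_inf inf_le_left (inf_le_right.trans le_sup_left)) (le_inf hAB le_sup_right)

/-- Lemma A: complementedness of `[S:L]` lifts to `[S ⊔ A : L]`. -/
theorem comp_sup_ideal {S A : LieSubalgebra F L} (hA : Paper.IsIdealSubalg A)
    (hS : Paper.IsComplementedInterval S) : Paper.IsComplementedInterval (S ⊔ A) := by
  intro B hB
  obtain ⟨C, hSC, hint, hsup⟩ := hS B (le_sup_left.trans hB)
  refine ⟨C ⊔ A, sup_le_sup_right hSC A, ?_, ?_⟩
  · rw [inf_sup_ideal hA (le_sup_right.trans hB), hint]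
  · rw [← sup_assoc, hsup]
    exact top_sup_eq _

end Stmt5Aux

section Stmt5Aux2

open Paper Module

variable {F : Type*} [Field F] {L : Type*} [LieRing L] [LieAlgebra F L]

/-- The key dichotomy: if `N₀ ≤ N` is a chief gap with `⁅N,N⁆ ≤ N₀`, and `P ⊔ N = ⊤`,
then `N₀ ⊔ (N ⊓ P)` is an ideal, hence equals `N₀` or `N`. -/
theorem dichotomy {N₀ N : LieSubalgebra F L} (hN₀ : Paper.IsIdealSubalg N₀)
    (hN : Paper.IsIdealSubalg N) (hle : N₀ ≤ N)
    (hab : ∀ a ∈ N, ∀ b ∈ N, ⁅a, b⁆ ∈ N₀)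
    (hchief : ∀ I : LieSubalgebra F L, Paper.IsIdealSubalg I → N₀ ≤ I → I ≤ N → I = N₀ ∨ I = N)
    (P : LieSubalgebra F L) (hPN : P ⊔ N = ⊤) :
    ((N : Submodule F L) ⊓ (P : Submodule F L) ≤ (N₀ : Submodule F L)) ∨
      ((N : Submodule F L) ≤ (N₀ : Submodule F L) ⊔ ((N : Submodule F L) ⊓ (P : Submodule F L))) := by
  set W : Submodule F L := (N : Submodule F L) ⊓ (P : Submodule F L) with hW
  have hWN : W ≤ (N : Submodule F L) := inf_le_left
  have hJN : (N₀ : Submodule F L) ⊔ W ≤ (N : Submodule F L) := sup_le (toSm_le hle) hWN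
  set J : LieSubalgebra F L :=
    { toSubmodule := (N₀ : Submodule F L) ⊔ W
      lie_mem' := by
        intro x y hx hy
        have hx' : x ∈ (N₀ : Submodule F L) ⊔ W := hx
        have hy' : y ∈ (N₀ : Submodule F L) ⊔ W := hy
        have hxN : x ∈ N := hJN hx'
        have hyN : y ∈ N := hJN hy'
        have : ⁅x, y⁆ ∈ N₀ := hab x hxN y hyN
        exact Submodule.mem_sup_left this } with hJ
  have hJideal : Paper.IsIdealSubalg J := by
    intro x z hz
    have hz' : z ∈ (N₀ : Submodule F L) ⊔ W := hz
    obtain ⟨z₀, hz₀, w, hw, rfl⟩ := Submodule.mem_sup.1 hz'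
    have hwN : w ∈ N := (inf_le_left : W ≤ _) hw
    have hwP : w ∈ P := (inf_le_right : W ≤ _) hw
    have hxtop : x ∈ P ⊔ N := by rw [hPN]; exact LieSubalgebra.mem_top x
    obtain ⟨p, hp, n, hn, rfl⟩ := (mem_sup_ideal hN).1 hxtop
    show ⁅p + n, z₀ + w⁆ ∈ (N₀ : Submodule F L) ⊔ W
    rw [add_lie, lie_add, lie_add]
    have h1 : ⁅p, z₀⁆ ∈ (N₀ : Submodule F L) := hN₀ p z₀ hz₀
    have h2 : ⁅p, w⁆ ∈ W := Submodule.mem_inf.2 ⟨hN p w hwN, P.lie_mem hp hwP⟩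
    have h3 : ⁅n, z₀⁆ ∈ (N₀ : Submodule F L) := hab n hn z₀ (hle hz₀)
    have h4 : ⁅n, w⁆ ∈ (N₀ : Submodule F L) := hab n hn w hwN
    exact add_mem (add_mem (Submodule.mem_sup_left h1) (Submodule.mem_sup_right h2))
      (add_mem (Submodule.mem_sup_left h3) (Submodule.mem_sup_left h4))
  have hN₀J : N₀ ≤ J := fun x hx => Submodule.mem_sup_left hx
  have hJNle : J ≤ N := fun x hx => hJN hx
  rcases hchief J hJideal hN₀J hJNle with h | h
  · left
    have : (J : Submodule F L) = (N₀ : Submodule F L) := by rw [h]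
    calc W ≤ (N₀ : Submodule F L) ⊔ W := le_sup_right
      _ = (N₀ : Submodule F L) := this
  · right
    have : (J : Submodule F L) = (N : Submodule F L) := by rw [h]
    rw [← this]

/-- Chief factors of a solvable Lie algebra are abelian. -/
theorem abelian_of_chief [LieAlgebra.IsSolvable L] {N₀ N : LieSubalgebra F L}
    (hN₀ : Paper.IsIdealSubalg N₀) (hN : Paper.IsIdealSubalg N) (hlt : N₀ < N)
    (hchief : ∀ I : LieSubalgebra F L, Paper.IsIdealSubalg I → N₀ ≤ I → I ≤ N → I = N₀ ∨ I = N) :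
    ∀ a ∈ N, ∀ b ∈ N, ⁅a, b⁆ ∈ N₀ := by
  set NI : LieIdeal F L := { N.toSubmodule with lie_mem := fun {x m} hm => hN x m hm } with hNI
  set N₀I : LieIdeal F L := { N₀.toSubmodule with lie_mem := fun {x m} hm => hN₀ x m hm } with hN₀I
  have hleI : N₀I ≤ NI := fun x hx => hlt.le hx
  set J : LieIdeal F L := N₀I ⊔ ⁅NI, NI⁆ with hJ
  set Js : LieSubalgebra F L :=
    { toSubmodule := (J : Submodule F L)
      lie_mem' := fun {x y} _ hy => J.lie_mem hy } with hJs
  have hJsideal : Paper.IsIdealSubalg Js := fun x a ha => J.lie_mem ha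
  have hN₀Js : N₀ ≤ Js := fun x hx => (le_sup_left : N₀I ≤ J) hx
  have hJsN : Js ≤ N := by
    have h2 : J ≤ NI := sup_le hleI (LieSubmodule.lie_le_right NI NI)
    exact fun x hx => h2 hx
  rcases hchief Js hJsideal hN₀Js hJsN with h | h
  · intro a ha b hb
    have : ⁅a, b⁆ ∈ ⁅NI, NI⁆ := LieSubmodule.lie_mem_lie ha hb
    have h2 : ⁅a, b⁆ ∈ Js := (le_sup_right : ⁅NI, NI⁆ ≤ J) this
    rw [h] at h2
    exact h2
  · exfalso
    have hNJ : NI ≤ J := fun x hx => by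
      have : x ∈ N := hx
      rw [← h] at this
      exact this
    have key : ∀ k, NI ≤ N₀I ⊔ LieAlgebra.derivedSeries F L k := by
      intro k
      induction k with
      | zero =>
        have : LieAlgebra.derivedSeries F L 0 = ⊤ := rfl
        rw [this]
        exact le_trans le_top le_sup_right
      | succ k ih =>
        have hds : LieAlgebra.derivedSeries F L (k + 1) =
            ⁅LieAlgebra.derivedSeries F L k, LieAlgebra.derivedSeries F L k⁆ := by
          rw [LieAlgebra.derivedSeries_def, LieAlgebra.derivedSeriesOfIdeal_succ]
        refine le_trans hNJ (sup_le le_sup_left ?_)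
        have h1 : ⁅NI, NI⁆ ≤ ⁅N₀I ⊔ LieAlgebra.derivedSeries F L k,
            N₀I ⊔ LieAlgebra.derivedSeries F L k⁆ := LieSubmodule.mono_lie ih ih
        refine le_trans h1 ?_
        rw [LieSubmodule.sup_lie, LieSubmodule.lie_sup, LieSubmodule.lie_sup]
        refine sup_le (sup_le ?_ ?_) (sup_le ?_ ?_)
        · exact le_trans (LieSubmodule.lie_le_left _ _) le_sup_left
        · exact le_trans (LieSubmodule.lie_le_left _ _) le_sup_left
        · exact le_trans (LieSubmodule.lie_le_right _ _) le_sup_left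
        · rw [hds]; exact le_sup_right
    obtain ⟨k, hk⟩ := LieAlgebra.IsSolvable.solvable (R := F) (L := L)
    have := key k
    rw [hk, sup_bot_eq] at this
    have hNN₀ : N ≤ N₀ := fun x hx => this hx
    exact hlt.not_ge hNN₀

end Stmt5Aux2

section Stmt5Aux3

open Paper Module

variable {F : Type*} [Field F] {L : Type*} [LieRing L] [LieAlgebra F L]

/-- The relative key lemma: with `N₀ ≤ N` an abelian chief gap, `N ⊄ S`,
`[S:L]` and `[T:L]` complemented, `N ≤ T`, `T = D ⊔ N`, `D ≤ S`, `N₀ ≤ D`,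
the interval `[D:L]` is complemented. -/
theorem rkl {N₀ N S T D : LieSubalgebra F L} (hN₀ : Paper.IsIdealSubalg N₀)
    (hN : Paper.IsIdealSubalg N) (hle : N₀ ≤ N)
    (hab : ∀ a ∈ N, ∀ b ∈ N, ⁅a, b⁆ ∈ N₀)
    (hchief : ∀ I : LieSubalgebra F L, Paper.IsIdealSubalg I → N₀ ≤ I → I ≤ N → I = N₀ ∨ I = N)
    (hS : Paper.IsComplementedInterval S) (hT : Paper.IsComplementedInterval T)
    (hNS : ¬ N ≤ S) (hNT : N ≤ T) (hDS : D ≤ S) (hDT : D ≤ T) (hN₀D : N₀ ≤ D)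
    (hTeq : T = D ⊔ N) :
    Paper.IsComplementedInterval D := by
  -- get the complement Fc of S ⊔ N over S
  obtain ⟨Fc, hSF, hFint, hFsup⟩ := hS (S ⊔ N) le_sup_left
  have hFN_top : Fc ⊔ N = ⊤ := by
    have h1 : (S ⊔ N) ⊔ Fc = N ⊔ (S ⊔ Fc) := by
      rw [sup_comm S N, sup_assoc]
    rw [h1, sup_eq_right.mpr hSF] at hFsup
    rw [sup_comm]
    exact hFsup
  have hNFc : (N : Submodule F L) ⊓ (Fc : Submodule F L) ≤ (N₀ : Submodule F L) := by
    rcases dichotomy hN₀ hN hle hab hchief Fc hFN_top with h | h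
    · exact h
    · exfalso
      apply hNS
      have hNF : N ≤ Fc := by
        intro x hx
        have h2 : x ∈ (N₀ : Submodule F L) ⊔ ((N : Submodule F L) ⊓ (Fc : Submodule F L)) := h hx
        have h3 : (N₀ : Submodule F L) ⊔ ((N : Submodule F L) ⊓ (Fc : Submodule F L)) ≤
            (Fc : Submodule F L) := sup_le (toSm_le (hN₀D.trans (hDS.trans hSF))) inf_le_right
        exact h3 h2
      have h4 : N ≤ (S ⊔ N) ⊓ Fc := le_inf le_sup_right hNF
      rw [hFint] at h4
      exact h4
  -- now complement an arbitrary B ⊇ D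
  intro B hDB
  have hTBN : T ≤ B ⊔ N := hTeq.le.trans (sup_le (hDB.trans le_sup_left) le_sup_right)
  obtain ⟨C, hTC, hCint, hCsup⟩ := hT (B ⊔ N) hTBN
  have hNC : N ≤ C := hNT.trans hTC
  have hBC_top : B ⊔ C = ⊤ := by
    rw [sup_assoc, sup_eq_right.mpr hNC] at hCsup
    exact hCsup
  have hBCT : B ⊓ C = B ⊓ T := by
    apply le_antisymm
    · refine le_inf inf_le_left ?_
      have h5 : B ⊓ C ≤ (B ⊔ N) ⊓ C := inf_le_inf_right _ le_sup_left
      rwa [hCint] at h5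
    · exact inf_le_inf_left _ hTC
  have hT' : (T : Submodule F L) = (D : Submodule F L) ⊔ (N : Submodule F L) := by
    rw [hTeq]; exact sup_toSubmodule hN
  have hBT' : ((B ⊓ C : LieSubalgebra F L) : Submodule F L) =
      (D : Submodule F L) ⊔ ((N : Submodule F L) ⊓ (B : Submodule F L)) := by
    rw [hBCT]
    show ((B ⊓ T : LieSubalgebra F L) : Submodule F L) = _
    rw [LieSubalgebra.inf_toSubmodule, hT', inf_comm,
      sup_inf_assoc_of_le (N : Submodule F L) (toSm_le hDB)]
  by_cases hBN : (B : Submodule F L) ⊓ (N : Submodule F L) ≤ (N₀ : Submodule F L)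
  · -- C itself is a complement
    refine ⟨C, hDT.trans hTC, ?_, hBC_top⟩
    apply LieSubalgebra.toSubmodule_injective
    rw [hBT']
    rw [inf_comm] at hBN
    exact sup_eq_left.mpr (hBN.trans (toSm_le hN₀D))
  · -- C ⊓ Fc is a complement
    refine ⟨C ⊓ Fc, le_inf (hDT.trans hTC) (hDS.trans hSF), ?_, ?_⟩
    · -- B ⊓ (C ⊓ Fc) = D
      apply LieSubalgebra.toSubmodule_injective
      rw [show B ⊓ (C ⊓ Fc) = (B ⊓ C) ⊓ Fc by rw [inf_assoc]]
      rw [LieSubalgebra.inf_toSubmodule, hBT',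
        sup_inf_assoc_of_le _ (toSm_le (hDS.trans hSF))]
      have h6 : ((N : Submodule F L) ⊓ (B : Submodule F L)) ⊓ (Fc : Submodule F L) ≤
          (D : Submodule F L) :=
        le_trans (inf_le_inf_right _ inf_le_left) (hNFc.trans (toSm_le hN₀D))
      exact sup_eq_left.mpr h6
    · -- B ⊔ (C ⊓ Fc) = ⊤
      have hKN : (C ⊓ Fc) ⊔ N = C := by
        apply LieSubalgebra.toSubmodule_injective
        rw [sup_toSubmodule hN, LieSubalgebra.inf_toSubmodule]
        have htop : (Fc : Submodule F L) ⊔ (N : Submodule F L) = ⊤ := by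
          rw [← sup_toSubmodule hN, hFN_top, LieSubalgebra.top_toSubmodule]
        calc ((C : Submodule F L) ⊓ (Fc : Submodule F L)) ⊔ (N : Submodule F L)
            = (N : Submodule F L) ⊔ ((Fc : Submodule F L) ⊓ (C : Submodule F L)) := by
              rw [sup_comm, inf_comm]
          _ = ((N : Submodule F L) ⊔ (Fc : Submodule F L)) ⊓ (C : Submodule F L) := by
              rw [sup_inf_assoc_of_le _ (toSm_le hNC)]
          _ = (C : Submodule F L) := by rw [sup_comm, htop, top_inf_eq]
      have hMNtop : (B ⊔ (C ⊓ Fc)) ⊔ N = ⊤ := by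
        rw [sup_assoc, hKN]
        exact hBC_top
      rcases dichotomy hN₀ hN hle hab hchief (B ⊔ (C ⊓ Fc)) hMNtop with h | h
      · exfalso
        apply hBN
        calc (B : Submodule F L) ⊓ (N : Submodule F L)
            ≤ (N : Submodule F L) ⊓ ((B ⊔ (C ⊓ Fc) : LieSubalgebra F L) : Submodule F L) := by
              rw [inf_comm]
              exact inf_le_inf_left _ (toSm_le (le_sup_left : B ≤ B ⊔ (C ⊓ Fc)))
          _ ≤ (N₀ : Submodule F L) := h
      · have hNM : N ≤ B ⊔ (C ⊓ Fc) := by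
          intro x hx
          have h2 := h hx
          have h3 : (N₀ : Submodule F L) ⊔ ((N : Submodule F L) ⊓
              ((B ⊔ (C ⊓ Fc) : LieSubalgebra F L) : Submodule F L)) ≤
              ((B ⊔ (C ⊓ Fc) : LieSubalgebra F L) : Submodule F L) :=
            sup_le (toSm_le ((hN₀D.trans hDB).trans le_sup_left)) inf_le_right
          exact h3 h2
        rw [sup_eq_left.mpr hNM] at hMNtop
        exact hMNtop

end Stmt5Aux3

section Stmt5Aux4

open Paper Module

variable {F : Type*} [Field F] {L : Type*} [LieRing L] [LieAlgebra F L]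

/-- Pushing a minimal element of `Ω(U)` through one abelian chief gap. -/
theorem step1 {N₀ N U S : LieSubalgebra F L} (hN₀ : Paper.IsIdealSubalg N₀)
    (hN : Paper.IsIdealSubalg N) (hle : N₀ ≤ N)
    (hab : ∀ a ∈ N, ∀ b ∈ N, ⁅a, b⁆ ∈ N₀)
    (hchief : ∀ I : LieSubalgebra F L, Paper.IsIdealSubalg I → N₀ ≤ I → I ≤ N → I = N₀ ∨ I = N)
    (hN₀S : N₀ ≤ S) (hS : S ∈ Paper.OmegaMin U) :
    S ⊔ N ∈ Paper.OmegaMin (U ⊔ N) := by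
  refine ⟨⟨sup_le_sup_right hS.1.1 N, comp_sup_ideal hN hS.1.2⟩, ?_⟩
  intro T hT hTle
  have hUT : U ≤ T := le_sup_left.trans hT.1
  have hNT : N ≤ T := le_sup_right.trans hT.1
  by_cases hNS : N ≤ S
  · -- then S ⊔ N = S and T = S
    have hSN : S ⊔ N = S := sup_eq_left.mpr hNS
    rw [hSN] at hTle ⊢
    exact hS.2 T ⟨hUT, hT.2⟩ hTle
  · have hTeq : T = (S ⊓ T) ⊔ N := by
      apply le_antisymm
      · intro x hx
        have hx' : x ∈ S ⊔ N := hTle hx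
        obtain ⟨s, hs, n, hn, heq⟩ := (mem_sup_ideal hN).1 hx'
        have hsT : s ∈ T := by
          have h1 : x - n ∈ T := T.sub_mem hx (hNT hn)
          have h2 : s = x - n := by rw [← heq]; abel
          rwa [h2]
        exact (mem_sup_ideal hN).2
          ⟨s, (LieSubalgebra.mem_inf _ _ _).2 ⟨hs, hsT⟩, n, hn, heq⟩
      · exact sup_le inf_le_right hNT
    have hcomp : Paper.IsComplementedInterval (S ⊓ T) :=
      rkl hN₀ hN hle hab hchief hS.1.2 hT.2 hNS hNT inf_le_left inf_le_right
        (le_inf hN₀S ((hle.trans hNT) |>.trans' (le_refl N₀) |>.trans_eq rfl)) hTeq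
    have hmem : S ⊓ T ∈ Paper.Omega U := ⟨le_inf hS.1.1 hUT, hcomp⟩
    have hDS : S ⊓ T = S := hS.2 (S ⊓ T) hmem inf_le_left
    have hST : S ≤ T := (le_of_eq hDS.symm).trans inf_le_right
    exact le_antisymm hTle (sup_le hST hNT)

/-- Existence of a chief gap `N₀ ⋖ N ≤ A`. -/
theorem exists_chief [FiniteDimensional F L] {N₀ A : LieSubalgebra F L}
    (hN₀ : Paper.IsIdealSubalg N₀) (hA : Paper.IsIdealSubalg A) (hlt : N₀ < A) :
    ∃ N : LieSubalgebra F L, Paper.IsIdealSubalg N ∧ N₀ < N ∧ N ≤ A ∧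
      (∀ I : LieSubalgebra F L, Paper.IsIdealSubalg I → N₀ ≤ I → I ≤ N → I = N₀ ∨ I = N) := by
  set s : Set ℕ := {n | ∃ I : LieSubalgebra F L,
    (Paper.IsIdealSubalg I ∧ N₀ < I ∧ I ≤ A) ∧ finrank F (I : Submodule F L) = n} with hs
  have hne : s.Nonempty := ⟨finrank F (A : Submodule F L), A, ⟨hA, hlt, le_rfl⟩, rfl⟩
  obtain ⟨N, ⟨hNideal, hN₀N, hNA⟩, hNrank⟩ := Nat.sInf_mem hne
  refine ⟨N, hNideal, hN₀N, hNA, ?_⟩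
  intro I hI hN₀I hIN
  by_cases hIeq : I = N₀
  · exact Or.inl hIeq
  · right
    have hlt' : N₀ < I := lt_of_le_of_ne hN₀I (Ne.symm hIeq)
    have hIs : finrank F (I : Submodule F L) ∈ s := ⟨I, ⟨hI, hlt', hIN.trans hNA⟩, rfl⟩
    have h1 : sInf s ≤ finrank F (I : Submodule F L) := Nat.sInf_le hIs
    rw [← hNrank] at h1
    apply LieSubalgebra.toSubmodule_injective
    exact Submodule.eq_of_le_of_finrank_le (toSm_le hIN) h1

theorem main_induction [LieAlgebra.IsSolvable L] [FiniteDimensional F L] :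
    ∀ (d : ℕ) (N₀ A U S : LieSubalgebra F L), Paper.IsIdealSubalg N₀ →
      Paper.IsIdealSubalg A → N₀ ≤ A →
      finrank F (A : Submodule F L) ≤ finrank F (N₀ : Submodule F L) + d →
      N₀ ≤ S → S ∈ Paper.OmegaMin U → S ⊔ A ∈ Paper.OmegaMin (U ⊔ A) := by
  have base : ∀ (A U S : LieSubalgebra F L), A ≤ S → S ∈ Paper.OmegaMin U →
      S ⊔ A ∈ Paper.OmegaMin (U ⊔ A) := by
    intro A U S hAS hS
    rw [sup_eq_left.mpr hAS]
    exact ⟨⟨sup_le hS.1.1 hAS, hS.1.2⟩,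
      fun T hT hTS => hS.2 T ⟨le_sup_left.trans hT.1, hT.2⟩ hTS⟩
  intro d
  induction d with
  | zero =>
    intro N₀ A U S hN₀ hA hle hrank hN₀S hS
    have : N₀ = A := by
      apply LieSubalgebra.toSubmodule_injective
      exact Submodule.eq_of_le_of_finrank_le (toSm_le hle) (by simpa using hrank)
    exact base A U S (this ▸ hN₀S) hS
  | succ d ih =>
    intro N₀ A U S hN₀ hA hle hrank hN₀S hS
    by_cases hAS : A ≤ S
    · exact base A U S hAS hS
    · have hlt : N₀ < A := lt_of_le_of_ne hle (fun h => hAS (h ▸ hN₀S))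
      obtain ⟨N, hNideal, hN₀N, hNA, hchief⟩ := exists_chief hN₀ hA hlt
      have hab := abelian_of_chief hN₀ hNideal hN₀N hchief
      have hstep : S ⊔ N ∈ Paper.OmegaMin (U ⊔ N) :=
        step1 hN₀ hNideal hN₀N.le hab hchief hN₀S hS
      have hrank' : finrank F (A : Submodule F L) ≤ finrank F (N : Submodule F L) + d := by
        have hsm : (N₀ : Submodule F L) < (N : Submodule F L) := by
          refine lt_of_le_of_ne (toSm_le hN₀N.le) ?_
          intro h
          exact hN₀N.ne (LieSubalgebra.toSubmodule_injective h)
        have := Submodule.finrank_lt_finrank_of_lt hsm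
        omega
      have hfin := ih N A (U ⊔ N) (S ⊔ N) hNideal hA hNA hrank' le_sup_right hstep
      rwa [sup_assoc, sup_assoc, sup_eq_right.mpr hNA] at hfin

end Stmt5Aux4


theorem stmt5 {F : Type*} [Field F] {L : Type*} [LieRing L] [LieAlgebra F L]
    [LieAlgebra.IsSolvable L] [FiniteDimensional F L]
    (A U S : LieSubalgebra F L) (hA : Paper.IsIdealSubalg A)
    (hS : S ∈ Paper.OmegaMin U) :
    S ⊔ A ∈ Paper.OmegaMin (U ⊔ A) := by
  have hbot : Paper.IsIdealSubalg (⊥ : LieSubalgebra F L) := by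
    intro x a ha
    have : a = 0 := by simpa using ha
    simp [this]
  exact main_induction (Module.finrank F (A : Submodule F L)) ⊥ A U S hbot hA bot_le
    (Nat.le_add_left _ _) bot_le hS
end

section
/- Let A₁ and A₂ be distinct minimal ideals of a solvable Lie algebra L and let U be a subalgebra. Then there is a bijection θ between the pairs of chief factors {A₁, (A₁+A₂)/A₁} and {A₂, (A₁+A₂)/A₂} such that corresponding chief factors have the same dimension and U-Frattini chief factors correspond to U-Frattini chief factors. -/
open LieAlgebra

namespace Paper

variable {F : Type*} [Field F] {L : Type*} [LieRing L] [LieAlgebra F L]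

/-- The dimension of the chief factor `A/B`. -/
noncomputable def factorDim (F : Type*) [Field F] {L : Type*} [LieRing L] [LieAlgebra F L]
    (B A : LieSubalgebra F L) : ℕ :=
  Module.finrank F A - Module.finrank F B

end Paper


namespace Paper

variable {F : Type*} [Field F] {L : Type*} [LieRing L] [LieAlgebra F L]

-- submodule sum = subalgebra sup when one side is an ideal
lemma sup_toSubmodule {V A : LieSubalgebra F L} (hA : IsIdealSubalg A) :
    ((V ⊔ A : LieSubalgebra F L) : Submodule F L) = (V : Submodule F L) ⊔ (A : Submodule F L) := by
  set S : LieSubalgebra F L :=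
    { toSubmodule := (V : Submodule F L) ⊔ (A : Submodule F L)
      lie_mem' := by
        intro x y hx hy
        replace hx : x ∈ (V : Submodule F L) ⊔ (A : Submodule F L) := hx
        replace hy : y ∈ (V : Submodule F L) ⊔ (A : Submodule F L) := hy
        rw [Submodule.mem_sup] at hx hy
        obtain ⟨v, hv, a, ha, rfl⟩ := hx
        obtain ⟨w, hw, b, hb, rfl⟩ := hy
        have h1 : ⁅v + a, w + b⁆ = ⁅v, w⁆ + (⁅v, b⁆ + (⁅a, w⁆ + ⁅a, b⁆)) := by
          simp only [lie_add, add_lie]; abel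
        show ⁅v + a, w + b⁆ ∈ (V : Submodule F L) ⊔ (A : Submodule F L)
        rw [h1, Submodule.mem_sup]
        refine ⟨⁅v, w⁆, V.lie_mem hv hw, _, ?_, rfl⟩
        refine A.toSubmodule.add_mem (hA v b hb) (A.toSubmodule.add_mem ?_ (hA a b hb))
        have : -⁅w, a⁆ ∈ A := neg_mem (hA w a ha)
        simpa using this } with hS
  refine le_antisymm ?_ ?_
  · have h2 : V ⊔ A ≤ S :=
      sup_le (fun x hx => Submodule.mem_sup_left hx) (fun x hx => Submodule.mem_sup_right hx)
    exact h2
  · exact sup_le (fun x hx => (le_sup_left : V ≤ V ⊔ A) hx)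
      (fun x hx => (le_sup_right : A ≤ V ⊔ A) hx)

lemma mem_sup_ideal {V A : LieSubalgebra F L} (hA : IsIdealSubalg A) {x : L} :
    x ∈ V ⊔ A ↔ ∃ v ∈ V, ∃ a ∈ A, v + a = x := by
  have := sup_toSubmodule (V := V) hA
  constructor
  · intro hx
    have : x ∈ ((V ⊔ A : LieSubalgebra F L) : Submodule F L) := hx
    rw [sup_toSubmodule hA, Submodule.mem_sup] at this
    obtain ⟨v, hv, a, ha, h⟩ := this
    exact ⟨v, hv, a, ha, h⟩
  · rintro ⟨v, hv, a, ha, rfl⟩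
    exact add_mem ((le_sup_left : V ≤ V ⊔ A) hv) ((le_sup_right : A ≤ V ⊔ A) ha)


lemma finrank_eq (A : LieSubalgebra F L) :
    Module.finrank F A = Module.finrank F (A : Submodule F L) := rfl


lemma minimal_abelian [LieAlgebra.IsSolvable L] {A : LieSubalgebra F L}
    (hA : IsMinimalIdeal A) : ∀ a ∈ A, ∀ b ∈ A, ⁅a, b⁆ = 0 := by
  obtain ⟨hbot, hid, hmin⟩ := hA
  set I : LieIdeal F L :=
    { toSubmodule := A.toSubmodule, lie_mem := fun {x m} hm => hid x m hm } with hI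
  set B : LieSubalgebra F L :=
    { toSubmodule := (⁅I, I⁆ : LieIdeal F L).toSubmodule,
      lie_mem' := fun {x y} _ hy => (⁅I, I⁆ : LieIdeal F L).lie_mem hy } with hB
  have hBid : IsIdealSubalg B := fun x a ha => (⁅I, I⁆ : LieIdeal F L).lie_mem ha
  have hBle : B ≤ A := fun x hx => LieSubmodule.lie_le_right I I hx
  rcases hmin B hBid hBle with h | h
  · intro a ha b hb
    have : ⁅a, b⁆ ∈ B := LieSubmodule.lie_mem_lie ha hb
    rw [h] at this
    exact (LieSubalgebra.mem_bot _).mp this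
  · exfalso
    have hJI : (⁅I, I⁆ : LieIdeal F L) = I := by
      apply LieSubmodule.ext
      intro x
      constructor
      · intro hx
        exact LieSubmodule.lie_le_right I I hx
      · intro hx
        have : x ∈ B := by rw [h]; exact hx
        exact this
    have hD : ∀ k, LieAlgebra.derivedSeriesOfIdeal F L k I = I := by
      intro k
      induction k with
      | zero => rfl
      | succ k ih => rw [LieAlgebra.derivedSeriesOfIdeal_succ, ih, hJI]
    obtain ⟨k, hk⟩ := LieAlgebra.IsSolvable.solvable (R := F) (L := L)
    have hle : LieAlgebra.derivedSeriesOfIdeal F L k I ≤ LieAlgebra.derivedSeries F L k :=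
      LieAlgebra.derivedSeriesOfIdeal_le (le_top : I ≤ ⊤) (le_refl k)
    rw [hD k, hk] at hle
    apply hbot
    rw [LieSubalgebra.eq_bot_iff]
    intro x hx
    simpa using hle hx


lemma isIdeal_inf {A B : LieSubalgebra F L} (hA : IsIdealSubalg A) (hB : IsIdealSubalg B) :
    IsIdealSubalg (A ⊓ B) := by
  intro x a ha
  rw [LieSubalgebra.mem_inf] at ha ⊢
  exact ⟨hA x a ha.1, hB x a ha.2⟩

lemma isIdeal_sup {A B : LieSubalgebra F L} (hA : IsIdealSubalg A) (hB : IsIdealSubalg B) :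
    IsIdealSubalg (A ⊔ B) := by
  intro x a ha
  rw [mem_sup_ideal hB] at ha ⊢
  obtain ⟨v, hv, b, hb, rfl⟩ := ha
  exact ⟨⁅x, v⁆, hA x v hv, ⁅x, b⁆, hB x b hb, (lie_add x v b).symm⟩

lemma minimal_inf_eq_bot {A₁ A₂ : LieSubalgebra F L}
    (h1 : IsMinimalIdeal A₁) (h2 : IsMinimalIdeal A₂) (hne : A₁ ≠ A₂) : A₁ ⊓ A₂ = ⊥ := by
  rcases h1.2.2 (A₁ ⊓ A₂) (isIdeal_inf h1.2.1 h2.2.1) inf_le_left with h | h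
  · exact h
  · exfalso
    have hle : A₁ ≤ A₂ := by rw [← h]; exact inf_le_right
    rcases h2.2.2 A₁ h1.2.1 hle with h' | h'
    · exact h1.1 h'
    · exact hne h'

lemma lie_eq_zero_of_ne {A₁ A₂ : LieSubalgebra F L}
    (h1 : IsMinimalIdeal A₁) (h2 : IsMinimalIdeal A₂) (hne : A₁ ≠ A₂)
    {a b : L} (ha : a ∈ A₁) (hb : b ∈ A₂) : ⁅a, b⁆ = 0 := by
  have h : ⁅a, b⁆ ∈ A₁ ⊓ A₂ := by
    rw [LieSubalgebra.mem_inf]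
    refine ⟨?_, h2.2.1 a b hb⟩
    have := h1.2.1 b a ha
    simpa using (neg_mem this : -⁅b, a⁆ ∈ A₁)
  rw [minimal_inf_eq_bot h1 h2 hne] at h
  exact (LieSubalgebra.mem_bot _).mp h

lemma sup_abelian [LieAlgebra.IsSolvable L] {A₁ A₂ : LieSubalgebra F L}
    (h1 : IsMinimalIdeal A₁) (h2 : IsMinimalIdeal A₂) (hne : A₁ ≠ A₂) :
    ∀ a ∈ A₁ ⊔ A₂, ∀ b ∈ A₁ ⊔ A₂, ⁅a, b⁆ = 0 := by
  intro a ha b hb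
  rw [mem_sup_ideal h2.2.1] at ha hb
  obtain ⟨v, hv, c, hc, rfl⟩ := ha
  obtain ⟨w, hw, d, hd, rfl⟩ := hb
  have h1' := minimal_abelian h1 v hv w hw
  have h2' := minimal_abelian h2 c hc d hd
  have h3 := lie_eq_zero_of_ne h1 h2 hne hv hd
  have h4 := lie_eq_zero_of_ne h1 h2 hne hw hc
  have h4' : ⁅c, w⁆ = 0 := by
    have : -⁅w, c⁆ = 0 := by rw [h4, neg_zero]
    rw [← lie_skew]; exact this
  simp [lie_add, add_lie, h1', h2', h3, h4']

/-- Helper: a subalgebra `B` is an ideal provided `L = V + A`, `B` is stable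
under brackets with `V` and with `A`. -/
lemma isIdeal_of_decomp {V A B : LieSubalgebra F L} (hA : IsIdealSubalg A)
    (hsum : V ⊔ A = ⊤)
    (hBV : ∀ v ∈ V, ∀ b ∈ B, ⁅v, b⁆ ∈ B)
    (hBA : ∀ a ∈ A, ∀ b ∈ B, ⁅a, b⁆ ∈ B) : IsIdealSubalg B := by
  intro x b hb
  have hx : x ∈ V ⊔ A := by rw [hsum]; exact LieSubalgebra.mem_top x
  rw [mem_sup_ideal hA] at hx
  obtain ⟨v, hv, a, ha, rfl⟩ := hx
  rw [add_lie]
  exact add_mem (hBV v hv b hb) (hBA a ha b hb)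


section FinDim
variable [FiniteDimensional F L]

lemma finrank_add_finrank (V W : LieSubalgebra F L) :
    Module.finrank F ((V : Submodule F L) ⊔ (W : Submodule F L) : Submodule F L)
      + Module.finrank F ↥(V ⊓ W) = Module.finrank F V + Module.finrank F W := by
  rw [finrank_eq, LieSubalgebra.inf_toSubmodule, finrank_eq, finrank_eq]
  exact Submodule.finrank_sup_add_finrank_inf_eq _ _

lemma finrank_sup_ideal {V A : LieSubalgebra F L} (hA : IsIdealSubalg A) :
    Module.finrank F ↥(V ⊔ A) + Module.finrank F ↥(V ⊓ A)
      = Module.finrank F V + Module.finrank F A := by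
  rw [finrank_eq (V ⊔ A), sup_toSubmodule hA]
  exact finrank_add_finrank V A

omit [FiniteDimensional F L] in
lemma finrank_bot' : Module.finrank F (⊥ : LieSubalgebra F L) = 0 := by
  rw [finrank_eq, LieSubalgebra.bot_toSubmodule]
  exact finrank_bot F L

lemma finrank_sup_ideal_disj {V A : LieSubalgebra F L} (hA : IsIdealSubalg A)
    (hd : V ⊓ A = ⊥) :
    Module.finrank F ↥(V ⊔ A) = Module.finrank F V + Module.finrank F A := by
  have := finrank_sup_ideal (V := V) hA
  rw [hd, finrank_bot'] at this
  omega

lemma eq_top_of_finrank' {X : LieSubalgebra F L}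
    (h : Module.finrank F X = Module.finrank F L) : X = ⊤ := by
  rw [← LieSubalgebra.toSubmodule_inj]
  have : (X : Submodule F L) = ⊤ := Submodule.eq_top_of_finrank_eq h
  rw [this]; rfl

lemma finrank_le' (X : LieSubalgebra F L) : Module.finrank F X ≤ Module.finrank F L := by
  rw [finrank_eq]; exact Submodule.finrank_le _

lemma finrank_lt_of_lt {X Y : LieSubalgebra F L} (h : X < Y) :
    Module.finrank F X < Module.finrank F Y := by
  rw [finrank_eq, finrank_eq]
  apply Submodule.finrank_lt_finrank_of_lt
  exact ⟨fun x hx => h.1 hx, fun hle => h.2 (fun x hx => hle hx)⟩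

lemma finrank_le_of_le {X Y : LieSubalgebra F L} (h : X ≤ Y) :
    Module.finrank F X ≤ Module.finrank F Y := by
  rw [finrank_eq, finrank_eq]
  exact Submodule.finrank_mono h

lemma eq_of_le_of_finrank_le' {X Y : LieSubalgebra F L} (h : X ≤ Y)
    (hr : Module.finrank F Y ≤ Module.finrank F X) : X = Y := by
  by_contra hne
  exact absurd (finrank_lt_of_lt (lt_of_le_of_ne h hne)) (by omega)

lemma finrank_pos_of_ne_bot {A : LieSubalgebra F L} (h : A ≠ ⊥) :
    0 < Module.finrank F A := by
  rw [finrank_eq]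
  rw [Module.finrank_pos_iff]
  rw [Submodule.nontrivial_iff_ne_bot]
  intro hb
  apply h
  rw [← LieSubalgebra.toSubmodule_inj, hb]; rfl

lemma exists_coatom {V : LieSubalgebra F L} (h : V ≠ ⊤) :
    ∃ M : LieSubalgebra F L, IsCoatom M ∧ V ≤ M :=
  (IsCoatomic.eq_top_or_exists_le_coatom V).resolve_left h

end FinDim

lemma le_phi_iff {X U : LieSubalgebra F L} :
    X ≤ phi U ↔ ∀ M : LieSubalgebra F L, IsCoatom M → U ≤ M → X ≤ M := by
  rw [phi, le_sInf_iff]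
  constructor
  · intro h M hM hU; exact h M ⟨hM, hU⟩
  · rintro h M ⟨hM, hU⟩; exact h M hM hU

lemma phi_le {U M : LieSubalgebra F L} (hM : IsCoatom M) (hU : U ≤ M) : phi U ≤ M :=
  sInf_le ⟨hM, hU⟩

lemma coatom_sup_eq_top {M X : LieSubalgebra F L} (hM : IsCoatom M) (h : ¬ X ≤ M) :
    M ⊔ X = ⊤ :=
  hM.2 _ (left_lt_sup.mpr h)

lemma minimal_compl {A V : LieSubalgebra F L}
    (hA : IsMinimalIdeal A) (habel : ∀ a ∈ A, ∀ b ∈ A, ⁅a, b⁆ = 0)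
    (hsum : V ⊔ A = ⊤) (hnle : ¬ A ≤ V) : V ⊓ A = ⊥ := by
  have hid : IsIdealSubalg (V ⊓ A) := by
    apply isIdeal_of_decomp hA.2.1 hsum
    · intro v hv b hb
      rw [LieSubalgebra.mem_inf] at hb ⊢
      exact ⟨V.lie_mem hv hb.1, hA.2.1 v b hb.2⟩
    · intro a ha b hb
      rw [LieSubalgebra.mem_inf] at hb
      rw [habel a ha b hb.2]
      exact zero_mem _
  rcases hA.2.2 _ hid inf_le_right with h | h
  · exact h
  · exact absurd (by rw [← h]; exact inf_le_left) hnle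


lemma finrank_top' [FiniteDimensional F L] :
    Module.finrank F (⊤ : LieSubalgebra F L) = Module.finrank F L := by
  rw [finrank_eq]
  have : ((⊤ : LieSubalgebra F L) : Submodule F L) = ⊤ := rfl
  rw [this, finrank_top]

section Main
variable [LieAlgebra.IsSolvable L] [FiniteDimensional F L]

lemma easy_dir {A₁ A₂ U : LieSubalgebra F L}
    (hP : IsUFrattiniFactor U ⊥ A₁) : IsUFrattiniFactor U A₂ (A₁ ⊔ A₂) := by
  rw [IsUFrattiniFactor, sup_bot_eq] at hP
  rcases hP with hP | hP
  · left
    rw [le_phi_iff]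
    intro M hM hUM
    exact sup_le (le_phi_iff.mp hP M hM (le_trans le_sup_left hUM))
      (le_trans le_sup_right hUM)
  · right; rw [hP, top_sup_eq]

lemma case2 {A₁ A₂ U : LieSubalgebra F L}
    (h1 : IsMinimalIdeal A₁) (h2 : IsMinimalIdeal A₂) (hne : A₁ ≠ A₂)
    (hQ : IsUFrattiniFactor U A₂ (A₁ ⊔ A₂)) (hP : ¬ IsUFrattiniFactor U ⊥ A₁) :
    (¬ IsUFrattiniFactor U ⊥ A₂) ∧ IsUFrattiniFactor U A₁ (A₁ ⊔ A₂) ∧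
      Module.finrank F A₁ = Module.finrank F A₂ := by
  rw [IsUFrattiniFactor, sup_bot_eq, not_or] at hP
  obtain ⟨hP1, hP2⟩ := hP
  rw [le_phi_iff] at hP1
  push_neg at hP1
  obtain ⟨M, hM, hUM, hA₁M⟩ := hP1
  have hd1pos : 0 < (Module.finrank F ↥A₁) := finrank_pos_of_ne_bot h1.1
  have hd2pos : 0 < (Module.finrank F ↥A₂) := finrank_pos_of_ne_bot h2.1
  have habel₁ := minimal_abelian h1
  have habel₂ := minimal_abelian h2
  have habelN := sup_abelian h1 h2 hne
  have hinf : A₁ ⊓ A₂ = ⊥ := minimal_inf_eq_bot h1 h2 hne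
  have hNid : IsIdealSubalg (A₁ ⊔ A₂) := isIdeal_sup h1.2.1 h2.2.1
  have hfrN : Module.finrank F ↥(A₁ ⊔ A₂) = (Module.finrank F ↥A₁) + (Module.finrank F ↥A₂) := finrank_sup_ideal_disj h2.2.1 hinf
  by_cases hW : U ⊔ A₂ = ⊤
  · -- Case A : U complements A₂
    have hA₂U : ¬ A₂ ≤ U := by
      intro h
      exact hP2 (by rw [← hW, sup_eq_left.mpr h])
    have hUA₂ : U ⊓ A₂ = ⊥ := minimal_compl h2 habel₂ hW hA₂U
    have hfrU : Module.finrank F U + (Module.finrank F ↥A₂) = (Module.finrank F L) := by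
      have := finrank_sup_ideal_disj h2.2.1 hUA₂
      rw [hW, finrank_top'] at this
      omega
    have hUcoatom : IsCoatom U := by
      constructor
      · exact hP2
      · intro X hX
        by_cases hA₂X : A₂ ≤ X
        · rw [eq_top_iff, ← hW]
          exact sup_le hX.le hA₂X
        · have hXW : X ⊔ A₂ = ⊤ := by
            rw [eq_top_iff, ← hW]
            exact sup_le (le_trans hX.le le_sup_left) le_sup_right
          have hXA₂ : X ⊓ A₂ = ⊥ := minimal_compl h2 habel₂ hXW hA₂X
          have hfrX : Module.finrank F X + (Module.finrank F ↥A₂) = (Module.finrank F L) := by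
            have := finrank_sup_ideal_disj h2.2.1 hXA₂
            rw [hXW, finrank_top'] at this
            omega
          have := finrank_lt_of_lt hX
          omega
    have hA₁U : ¬ A₁ ≤ U := by
      intro h
      apply hA₁M
      -- every coatom over U equals U
      have : M = U := by
        rcases eq_or_lt_of_le hUM with h' | h'
        · exact h'.symm
        · exact absurd (hUcoatom.2 M h') hM.1
      rw [this]; exact h
    have hUA₁ : U ⊓ A₁ = ⊥ := by
      have hid : IsIdealSubalg (U ⊓ A₁) := by
        apply isIdeal_of_decomp h2.2.1 hW
        · intro v hv b hb
          rw [LieSubalgebra.mem_inf] at hb ⊢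
          exact ⟨U.lie_mem hv hb.1, h1.2.1 v b hb.2⟩
        · intro a ha b hb
          rw [LieSubalgebra.mem_inf] at hb
          have : ⁅b, a⁆ = 0 := lie_eq_zero_of_ne h1 h2 hne hb.2 ha
          have h0 : ⁅a, b⁆ = 0 := by rw [← lie_skew, this, neg_zero]
          rw [h0]; exact zero_mem _
      rcases h1.2.2 _ hid inf_le_right with h | h
      · exact h
      · exact absurd (by rw [← h]; exact inf_le_left) hA₁U
    -- the diagonal ideal ((A₁ ⊔ A₂) ⊓ U)
    have hKid : IsIdealSubalg ((A₁ ⊔ A₂) ⊓ U) := by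
      apply isIdeal_of_decomp h2.2.1 hW
      · intro v hv b hb
        rw [LieSubalgebra.mem_inf] at hb ⊢
        exact ⟨hNid v b hb.1, U.lie_mem hv hb.2⟩
      · intro a ha b hb
        rw [LieSubalgebra.mem_inf] at hb
        rw [habelN a (le_sup_right (a := A₁) ha) b hb.1]
        exact zero_mem _
    have hKA₁ : ((A₁ ⊔ A₂) ⊓ U) ⊓ A₁ = ⊥ := by
      rw [← le_bot_iff, ← hUA₁]
      exact inf_le_inf_right A₁ inf_le_right
    have hKA₂ : ((A₁ ⊔ A₂) ⊓ U) ⊓ A₂ = ⊥ := by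
      rw [← le_bot_iff, ← hUA₂]
      exact inf_le_inf_right A₂ inf_le_right
    have hfrK_low : (Module.finrank F ↥A₁) ≤ Module.finrank F ↥((A₁ ⊔ A₂) ⊓ U) := by
      have h3 := finrank_add_finrank (A₁ ⊔ A₂) U
      have h4 : Module.finrank F
          (((A₁ ⊔ A₂ : LieSubalgebra F L) : Submodule F L) ⊔ (U : Submodule F L) : Submodule F L)
          ≤ (Module.finrank F L) := by
        rw [← finrank_top (R := F) (M := L)]
        exact Submodule.finrank_mono le_top
      rw [hfrN] at h3
      omega
    have hfrK_hi : Module.finrank F ↥((A₁ ⊔ A₂) ⊓ U) + (Module.finrank F ↥A₁) ≤ (Module.finrank F ↥A₁) + (Module.finrank F ↥A₂) := by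
      have h5 : ((A₁ ⊔ A₂) ⊓ U) ⊔ A₁ ≤ A₁ ⊔ A₂ := sup_le inf_le_left le_sup_left
      have h6 := finrank_sup_ideal_disj h1.2.1 hKA₁
      have h11 := finrank_le_of_le h5
      rw [h6, hfrN] at h11
      exact h11
    have hdd : (Module.finrank F ↥A₁) = (Module.finrank F ↥A₂) := by
      rcases h2.2.2 ((((A₁ ⊔ A₂) ⊓ U) ⊔ A₁) ⊓ A₂) (isIdeal_inf (isIdeal_sup hKid h1.2.1) h2.2.1)
          inf_le_right with h | h
      · exfalso
        have h6 := finrank_sup_ideal_disj h2.2.1 h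
        have h7 := finrank_sup_ideal_disj h1.2.1 hKA₁
        have h8 : (((A₁ ⊔ A₂) ⊓ U) ⊔ A₁) ⊔ A₂ ≤ A₁ ⊔ A₂ :=
          sup_le (sup_le inf_le_left le_sup_left) le_sup_right
        have h12 := finrank_le_of_le h8
        rw [h6, h7, hfrN] at h12
        omega
      · have hA₂le : A₂ ≤ ((A₁ ⊔ A₂) ⊓ U) ⊔ A₁ := by
          conv_lhs => rw [← h]
          exact inf_le_left
        have h9 : A₁ ⊔ A₂ ≤ ((A₁ ⊔ A₂) ⊓ U) ⊔ A₁ := sup_le le_sup_right hA₂le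
        have h7 := finrank_sup_ideal_disj h1.2.1 hKA₁
        have h13 := finrank_le_of_le h9
        rw [h7, hfrN] at h13
        have h14 := finrank_sup_ideal_disj h2.2.1 hKA₂
        have h15 : ((A₁ ⊔ A₂) ⊓ U) ⊔ A₂ ≤ A₁ ⊔ A₂ := sup_le inf_le_left le_sup_right
        have h16 := finrank_le_of_le h15
        rw [h14, hfrN] at h16
        omega
    refine ⟨?_, ?_, hdd⟩
    · rw [IsUFrattiniFactor, sup_bot_eq, not_or]
      refine ⟨?_, hP2⟩
      intro h
      exact hA₂U (le_trans h (phi_le hUcoatom le_rfl))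
    · right
      apply eq_top_of_finrank'
      rw [finrank_sup_ideal_disj h1.2.1 hUA₁]
      omega
  · -- Case B
    have hQφ : A₁ ⊔ A₂ ≤ phi (U ⊔ A₂) := hQ.resolve_right hW
    have hA₂M : ¬ A₂ ≤ M := by
      intro h
      exact hA₁M (le_trans le_sup_left
        (le_trans hQφ (phi_le hM (sup_le hUM h))))
    have hMA₁top : M ⊔ A₁ = ⊤ := coatom_sup_eq_top hM hA₁M
    have hMA₂top : M ⊔ A₂ = ⊤ := coatom_sup_eq_top hM hA₂M
    have hMA₁ : M ⊓ A₁ = ⊥ := minimal_compl h1 habel₁ hMA₁top hA₁M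
    have hMA₂ : M ⊓ A₂ = ⊥ := minimal_compl h2 habel₂ hMA₂top hA₂M
    have hfrM₁ : Module.finrank F M + (Module.finrank F ↥A₁) = (Module.finrank F L) := by
      have := finrank_sup_ideal_disj h1.2.1 hMA₁
      rw [hMA₁top, finrank_top'] at this
      omega
    have hfrM₂ : Module.finrank F M + (Module.finrank F ↥A₂) = (Module.finrank F L) := by
      have := finrank_sup_ideal_disj h2.2.1 hMA₂
      rw [hMA₂top, finrank_top'] at this
      omega
    have hdd : (Module.finrank F ↥A₁) = (Module.finrank F ↥A₂) := by omega
    refine ⟨?_, ?_, hdd⟩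
    · rw [IsUFrattiniFactor, sup_bot_eq, not_or]
      refine ⟨?_, hP2⟩
      intro h
      exact hA₂M (le_trans h (phi_le hM hUM))
    · by_cases hT : U ⊔ A₁ = ⊤
      · right; exact hT
      left
      rw [le_phi_iff]
      intro M' hM' hUM'
      have hA₁M' : A₁ ≤ M' := le_trans le_sup_right hUM'
      refine sup_le hA₁M' ?_
      by_contra hA₂M'
      have hM'A₂top : M' ⊔ A₂ = ⊤ := coatom_sup_eq_top hM' hA₂M'
      have hM'A₂ : M' ⊓ A₂ = ⊥ := minimal_compl h2 habel₂ hM'A₂top hA₂M'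
      have hfrM' : Module.finrank F M' + (Module.finrank F ↥A₂) = (Module.finrank F L) := by
        have := finrank_sup_ideal_disj h2.2.1 hM'A₂
        rw [hM'A₂top, finrank_top'] at this
        omega
      -- diagonal ideal (M ⊓ (A₁ ⊔ A₂)) = M ⊓ N
      have hKid : IsIdealSubalg (M ⊓ (A₁ ⊔ A₂)) := by
        apply isIdeal_of_decomp h1.2.1 hMA₁top
        · intro v hv b hb
          rw [LieSubalgebra.mem_inf] at hb ⊢
          exact ⟨M.lie_mem hv hb.1, hNid v b hb.2⟩
        · intro a ha b hb
          rw [LieSubalgebra.mem_inf] at hb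
          rw [habelN a (le_sup_left (b := A₂) ha) b hb.2]
          exact zero_mem _
      have hMNtop : M ⊔ (A₁ ⊔ A₂) = ⊤ := by
        rw [eq_top_iff, ← hMA₁top]
        exact sup_le le_sup_left (le_trans le_sup_left le_sup_right)
      have hfrK : Module.finrank F ↥(M ⊓ (A₁ ⊔ A₂)) + (Module.finrank F ↥A₂) = (Module.finrank F ↥A₁) + (Module.finrank F ↥A₂) := by
        have := finrank_sup_ideal (V := M) hNid
        rw [hMNtop, finrank_top', hfrN] at this
        omega
      have hKA₁ : (M ⊓ (A₁ ⊔ A₂)) ⊓ A₁ = ⊥ := by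
        rw [← le_bot_iff, ← hMA₁]
        exact inf_le_inf_right A₁ inf_le_left
      have hKA₁N : (M ⊓ (A₁ ⊔ A₂)) ⊔ A₁ = A₁ ⊔ A₂ := by
        apply eq_of_le_of_finrank_le' (sup_le inf_le_right le_sup_left)
        rw [finrank_sup_ideal_disj h1.2.1 hKA₁, hfrN]
        omega
      have hUY : U ≤ (M ⊓ M') := le_inf hUM (le_trans le_sup_left hUM')
      have hYA₁ : (M ⊓ M') ⊓ A₁ = ⊥ := by
        rw [← le_bot_iff, ← hMA₁]
        exact inf_le_inf_right A₁ inf_le_left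
      have hYM' : (M ⊓ M') ⊔ A₁ = M' := by
        apply le_antisymm (sup_le inf_le_right hA₁M')
        intro x hx
        have hx' : x ∈ M ⊔ A₁ := by rw [hMA₁top]; exact LieSubalgebra.mem_top x
        rw [mem_sup_ideal h1.2.1] at hx'
        obtain ⟨m, hm, a, ha, hma⟩ := hx'
        have hmM' : m ∈ M' := by
          have : m = x - a := by rw [← hma]; abel
          rw [this]
          exact sub_mem hx (hA₁M' ha)
        rw [mem_sup_ideal h1.2.1]
        exact ⟨m, ⟨hm, hmM'⟩, a, ha, hma⟩
      have hKY : ¬ (M ⊓ (A₁ ⊔ A₂)) ≤ (M ⊓ M') := by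
        intro h
        apply hA₂M'
        have : A₂ ≤ (M ⊓ (A₁ ⊔ A₂)) ⊔ A₁ := by rw [hKA₁N]; exact le_sup_right
        exact le_trans this (sup_le (le_trans h inf_le_right) hA₁M')
      have hfrY : Module.finrank F ↥(M ⊓ M') + (Module.finrank F ↥A₁) = Module.finrank F M' := by
        have := finrank_sup_ideal_disj h1.2.1 hYA₁
        rw [hYM'] at this
        omega
      have hWM2 : U ⊔ A₂ ≤ ((M ⊓ M') ⊔ A₂) := sup_le (le_trans hUY le_sup_left) le_sup_right
      have hYA₂ : (M ⊓ M') ⊓ A₂ = ⊥ := by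
        rw [← le_bot_iff, ← hMA₂]
        exact inf_le_inf_right A₂ inf_le_left
      have hfrM2 : Module.finrank F ↥((M ⊓ M') ⊔ A₂) + (Module.finrank F ↥A₁) = (Module.finrank F L) := by
        rw [finrank_sup_ideal_disj h2.2.1 hYA₂]
        omega
      have hM''M : ((M ⊓ M') ⊔ A₂) ⊓ M = (M ⊓ M') := by
        apply le_antisymm
        · intro x hx
          rw [LieSubalgebra.mem_inf] at hx
          obtain ⟨hx1, hx2⟩ := hx
          rw [mem_sup_ideal h2.2.1] at hx1
          obtain ⟨y, hy, a, ha, hya⟩ := hx1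
          have haM : a ∈ M := by
            have : a = x - y := by rw [← hya]; abel
            rw [this]
            exact sub_mem hx2 ((inf_le_left : M ⊓ M' ≤ M) hy)
          have : a ∈ M ⊓ A₂ := ⟨haM, ha⟩
          rw [hMA₂] at this
          have ha0 : a = 0 := (LieSubalgebra.mem_bot _).mp this
          rw [← hya, ha0, add_zero]
          exact hy
        · exact le_inf le_sup_left inf_le_left
      have hM''ne : ((M ⊓ M') ⊔ A₂) ≠ ⊤ := by
        intro h
        rw [h, finrank_top'] at hfrM2
        omega
      have hYmaxM : ∀ T : LieSubalgebra F L, (M ⊓ M') < T → T ≤ M → T = M := by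
        intro T hYT hTM
        have hTA₁ : T ⊓ A₁ = ⊥ := by
          rw [← le_bot_iff, ← hMA₁]
          exact inf_le_inf_right A₁ hTM
        have hM'le : M' ≤ T ⊔ A₁ := by
          rw [← hYM']
          exact sup_le_sup_right hYT.le A₁
        have hlt : M' ≠ T ⊔ A₁ := by
          intro h
          apply hYT.ne
          apply le_antisymm hYT.le
          have : T ≤ M' := by rw [h]; exact le_sup_left
          exact le_inf hTM this
        have htop : T ⊔ A₁ = ⊤ := hM'.2 _ (lt_of_le_of_ne hM'le hlt)
        apply eq_of_le_of_finrank_le' hTM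
        have := finrank_sup_ideal_disj h1.2.1 hTA₁
        rw [htop, finrank_top'] at this
        omega
      have hM''coatom : IsCoatom ((M ⊓ M') ⊔ A₂) := by
        refine ⟨hM''ne, ?_⟩
        intro X hX
        have hXdecomp : X = (X ⊓ M) ⊔ A₂ := by
          apply le_antisymm
          · intro x hx
            have hx' : x ∈ M ⊔ A₂ := by rw [hMA₂top]; exact LieSubalgebra.mem_top x
            rw [mem_sup_ideal h2.2.1] at hx'
            obtain ⟨m, hm, a, ha, hma⟩ := hx'
            have hmX : m ∈ X := by
              have : m = x - a := by rw [← hma]; abel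
              rw [this]
              exact sub_mem hx (hX.le (le_sup_right (a := (M ⊓ M')) ha))
            rw [mem_sup_ideal h2.2.1]
            exact ⟨m, ⟨hmX, hm⟩, a, ha, hma⟩
          · exact sup_le inf_le_left (le_trans (le_sup_right (a := (M ⊓ M'))) hX.le)
        have hYXM : (M ⊓ M') ≤ X ⊓ M := by
          rw [← hM''M]
          exact inf_le_inf_right M hX.le
        have hYne : (M ⊓ M') ≠ X ⊓ M := by
          intro h
          apply hX.ne
          rw [hXdecomp, ← h]
        have hXM : X ⊓ M = M := hYmaxM _ (lt_of_le_of_ne hYXM hYne) inf_le_right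
        have hMX : M ≤ X := by rw [← hXM]; exact inf_le_left
        rw [eq_top_iff, ← hMA₂top]
        exact sup_le hMX (le_trans (le_sup_right (a := (M ⊓ M'))) hX.le)
      -- final contradiction
      apply hKY
      have hKM2 : (M ⊓ (A₁ ⊔ A₂)) ≤ ((M ⊓ M') ⊔ A₂) := le_trans inf_le_right (le_trans hQφ (phi_le hM''coatom hWM2))
      rw [← hM''M]
      exact le_inf hKM2 inf_le_left

end Main

end Paper

theorem stmt8 {F : Type*} [Field F] {L : Type*} [LieRing L] [LieAlgebra F L]
    [LieAlgebra.IsSolvable L] [FiniteDimensional F L]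
    (A₁ A₂ U : LieSubalgebra F L)
    (hA₁ : Paper.IsMinimalIdeal A₁) (hA₂ : Paper.IsMinimalIdeal A₂) (hne : A₁ ≠ A₂)
    (C₁ C₂ : Fin 3 → LieSubalgebra F L)
    (hC₁ : C₁ = ![⊥, A₁, A₁ ⊔ A₂]) (hC₂ : C₂ = ![⊥, A₂, A₁ ⊔ A₂]) :
    ∃ θ : Equiv.Perm (Fin 2), ∀ i : Fin 2,
      Paper.factorDim F (C₁ i.castSucc) (C₁ i.succ)
        = Paper.factorDim F (C₂ (θ i).castSucc) (C₂ (θ i).succ) ∧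
      (Paper.IsUFrattiniFactor U (C₁ i.castSucc) (C₁ i.succ) ↔
        Paper.IsUFrattiniFactor U (C₂ (θ i).castSucc) (C₂ (θ i).succ)) := by
  subst hC₁ hC₂
  have hfrN : Module.finrank F ↥(A₁ ⊔ A₂)
      = Module.finrank F ↥A₁ + Module.finrank F ↥A₂ :=
    Paper.finrank_sup_ideal_disj hA₂.2.1 (Paper.minimal_inf_eq_bot hA₁ hA₂ hne)
  have hD1 : Paper.factorDim F ⊥ A₁ = Module.finrank F A₁ := by
    rw [Paper.factorDim, Paper.finrank_bot']; omega
  have hD2 : Paper.factorDim F ⊥ A₂ = Module.finrank F A₂ := by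
    rw [Paper.factorDim, Paper.finrank_bot']; omega
  have hDN1 : Paper.factorDim F A₁ (A₁ ⊔ A₂) = Module.finrank F A₂ := by
    rw [Paper.factorDim, hfrN]; omega
  have hDN2 : Paper.factorDim F A₂ (A₁ ⊔ A₂) = Module.finrank F A₁ := by
    rw [Paper.factorDim, hfrN]; omega
  have e12 : Paper.IsUFrattiniFactor U ⊥ A₁ → Paper.IsUFrattiniFactor U A₂ (A₁ ⊔ A₂) :=
    Paper.easy_dir
  have e21 : Paper.IsUFrattiniFactor U ⊥ A₂ → Paper.IsUFrattiniFactor U A₁ (A₁ ⊔ A₂) := by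
    intro h
    have h' := Paper.easy_dir (A₂ := A₁) h
    rwa [sup_comm] at h'
  by_cases h1 : Paper.IsUFrattiniFactor U A₂ (A₁ ⊔ A₂) → Paper.IsUFrattiniFactor U ⊥ A₁
  · by_cases h2 : Paper.IsUFrattiniFactor U A₁ (A₁ ⊔ A₂) → Paper.IsUFrattiniFactor U ⊥ A₂
    · refine ⟨Equiv.swap 0 1, ?_⟩
      intro i
      fin_cases i
      · constructor
        · show Paper.factorDim F ⊥ A₁ = Paper.factorDim F A₂ (A₁ ⊔ A₂)
          rw [hD1, hDN2]
        · show Paper.IsUFrattiniFactor U ⊥ A₁ ↔ Paper.IsUFrattiniFactor U A₂ (A₁ ⊔ A₂)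
          exact ⟨e12, h1⟩
      · constructor
        · show Paper.factorDim F A₁ (A₁ ⊔ A₂) = Paper.factorDim F ⊥ A₂
          rw [hDN1, hD2]
        · show Paper.IsUFrattiniFactor U A₁ (A₁ ⊔ A₂) ↔ Paper.IsUFrattiniFactor U ⊥ A₂
          exact ⟨h2, e21⟩
    · push_neg at h2
      obtain ⟨hQ1, hnP2⟩ := h2
      have hQ1' : Paper.IsUFrattiniFactor U A₁ (A₂ ⊔ A₁) := by rwa [sup_comm] at hQ1
      obtain ⟨hnP1, hQ2', hdd'⟩ := Paper.case2 hA₂ hA₁ hne.symm hQ1' hnP2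
      have hQ2 : Paper.IsUFrattiniFactor U A₂ (A₁ ⊔ A₂) := by rwa [sup_comm] at hQ2'
      refine ⟨Equiv.refl _, ?_⟩
      intro i
      fin_cases i
      · constructor
        · show Paper.factorDim F ⊥ A₁ = Paper.factorDim F ⊥ A₂
          rw [hD1, hD2, hdd'.symm]
        · show Paper.IsUFrattiniFactor U ⊥ A₁ ↔ Paper.IsUFrattiniFactor U ⊥ A₂
          exact iff_of_false hnP1 hnP2
      · constructor
        · show Paper.factorDim F A₁ (A₁ ⊔ A₂) = Paper.factorDim F A₂ (A₁ ⊔ A₂)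
          rw [hDN1, hDN2, hdd'.symm]
        · show Paper.IsUFrattiniFactor U A₁ (A₁ ⊔ A₂) ↔ Paper.IsUFrattiniFactor U A₂ (A₁ ⊔ A₂)
          exact iff_of_true hQ1 hQ2
  · push_neg at h1
    obtain ⟨hQ2, hnP1⟩ := h1
    obtain ⟨hnP2, hQ1, hdd⟩ := Paper.case2 hA₁ hA₂ hne hQ2 hnP1
    refine ⟨Equiv.refl _, ?_⟩
    intro i
    fin_cases i
    · constructor
      · show Paper.factorDim F ⊥ A₁ = Paper.factorDim F ⊥ A₂
        rw [hD1, hD2, hdd]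
      · show Paper.IsUFrattiniFactor U ⊥ A₁ ↔ Paper.IsUFrattiniFactor U ⊥ A₂
        exact iff_of_false hnP1 hnP2
    · constructor
      · show Paper.factorDim F A₁ (A₁ ⊔ A₂) = Paper.factorDim F A₂ (A₁ ⊔ A₂)
        rw [hDN1, hDN2, hdd]
      · show Paper.IsUFrattiniFactor U A₁ (A₁ ⊔ A₂) ↔ Paper.IsUFrattiniFactor U A₂ (A₁ ⊔ A₂)
        exact iff_of_true hQ1 hQ2
end

section
/- Let L be a solvable Lie algebra with a fixed chief series, and let B be a U-prefrattini subalgebra of L. Then B covers every U-Frattini chief factor of the series (B + A_i = B + A_{i-1}) and avoids every non-U-Frattini chief factor (B ∩ A_i = B ∩ A_{i-1}). -/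
open LieAlgebra

open Module

namespace PFAux

variable {F : Type*} [Field F] {L : Type*} [LieRing L] [LieAlgebra F L]

/-- Promote a subalgebra satisfying `IsIdealSubalg` to a `LieIdeal`. -/
def toLieIdeal {A : LieSubalgebra F L} (h : ∀ x : L, ∀ a ∈ A, ⁅x, a⁆ ∈ A) :
    LieIdeal F L :=
  { A.toSubmodule with lie_mem := fun {x m} hm => h x m hm }

lemma mem_toLieIdeal {A : LieSubalgebra F L} (h : ∀ x : L, ∀ a ∈ A, ⁅x, a⁆ ∈ A) {x : L} :
    x ∈ toLieIdeal h ↔ x ∈ A := Iff.rfl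

/-- A Lie ideal, viewed as a subalgebra. -/
def idealToSubalg (I : LieIdeal F L) : LieSubalgebra F L :=
  { (I : Submodule F L) with lie_mem' := fun _ hy => I.lie_mem hy }

lemma mem_idealToSubalg {I : LieIdeal F L} {x : L} : x ∈ idealToSubalg I ↔ x ∈ I := Iff.rfl


lemma chief_abelian [LieAlgebra.IsSolvable L]
    {A : ℕ → LieSubalgebra F L} {n : ℕ} (hA : Paper.IsChiefSeries A n)
    {i : ℕ} (hi : i < n) :
    ∀ x ∈ A (i + 1), ∀ y ∈ A (i + 1), ⁅x, y⁆ ∈ A i := by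
  obtain ⟨h0, hn, hideal, hstep⟩ := hA
  set J : LieIdeal F L := toLieIdeal (hideal (i + 1)) with hJdef
  set J0 : LieIdeal F L := toLieIdeal (hideal i) with hJ0def
  have hle : A i ≤ A (i + 1) := (hstep i hi).1.le
  have hJ0J : J0 ≤ J := fun x hx => hle hx
  set C : LieIdeal F L := J0 ⊔ ⁅J, J⁆ with hC
  set C' : LieSubalgebra F L := idealToSubalg C with hC'
  have hC'ideal : Paper.IsIdealSubalg C' := fun x a ha => C.lie_mem ha
  have hC'low : A i ≤ C' := fun x hx =>
    mem_idealToSubalg.2 ((le_sup_left : J0 ≤ C) hx)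
  have hJJ : (⁅J, J⁆ : LieIdeal F L) ≤ J := LieSubmodule.lie_le_left J J
  have hC'high : C' ≤ A (i + 1) := fun x hx =>
    (sup_le hJ0J hJJ : C ≤ J) (mem_idealToSubalg.1 hx)
  rcases (hstep i hi).2 C' hC'ideal hC'low hC'high with hlo | hhi
  · intro x hx y hy
    have h1 : ⁅x, y⁆ ∈ (⁅J, J⁆ : LieIdeal F L) := LieSubmodule.lie_mem_lie hx hy
    have h2 : ⁅x, y⁆ ∈ C' := mem_idealToSubalg.2 ((le_sup_right : ⁅J, J⁆ ≤ C) h1)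
    rwa [hlo] at h2
  · exfalso
    have hJC : J ≤ C := fun x hx => mem_idealToSubalg.1 (show x ∈ C' from hhi ▸ (hx : x ∈ A (i + 1)))
    have key : ∀ k, J ≤ J0 ⊔ LieAlgebra.derivedSeriesOfIdeal F L k J := by
      intro k
      induction k with
      | zero => rw [LieAlgebra.derivedSeriesOfIdeal_zero]; exact le_sup_right
      | succ k ih =>
        have h2 : (⁅J, J⁆ : LieIdeal F L) ≤
            J0 ⊔ LieAlgebra.derivedSeriesOfIdeal F L (k + 1) J := by
          set D := LieAlgebra.derivedSeriesOfIdeal F L k J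
          calc (⁅J, J⁆ : LieIdeal F L) ≤ ⁅J0 ⊔ D, J0 ⊔ D⁆ := LieSubmodule.mono_lie ih ih
            _ = ⁅J0, J0 ⊔ D⁆ ⊔ ⁅D, J0 ⊔ D⁆ := LieSubmodule.sup_lie _ _ _
            _ ≤ J0 ⊔ LieAlgebra.derivedSeriesOfIdeal F L (k + 1) J := by
                apply sup_le
                · exact le_trans (LieSubmodule.lie_le_left _ _) le_sup_left
                · rw [LieSubmodule.lie_sup]
                  apply sup_le
                  · exact le_trans (LieSubmodule.lie_le_right _ _) le_sup_left
                  · rw [LieAlgebra.derivedSeriesOfIdeal_succ]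
                    exact le_sup_right
        calc J ≤ C := hJC
          _ = J0 ⊔ ⁅J, J⁆ := rfl
          _ ≤ J0 ⊔ (J0 ⊔ LieAlgebra.derivedSeriesOfIdeal F L (k + 1) J) := sup_le_sup_left h2 _
          _ = J0 ⊔ LieAlgebra.derivedSeriesOfIdeal F L (k + 1) J := by rw [← sup_assoc, sup_idem]
    obtain ⟨k, hk⟩ := LieAlgebra.IsSolvable.solvable F L
    have hbot : LieAlgebra.derivedSeriesOfIdeal F L k J = ⊥ := by
      have := LieAlgebra.derivedSeriesOfIdeal_le (le_top : J ≤ ⊤) (le_refl k)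
      rw [← LieAlgebra.derivedSeries_def] at this
      exact le_bot_iff.1 (hk ▸ this)
    have : J ≤ J0 := by
      have := key k
      rwa [hbot, sup_bot_eq] at this
    exact (hstep i hi).1.not_ge (fun x hx => this hx)


lemma sup_coe_submodule_of_ideal (B : LieSubalgebra F L) {A : LieSubalgebra F L}
    (hA : Paper.IsIdealSubalg A) :
    ((B ⊔ A : LieSubalgebra F L) : Submodule F L) =
      (B : Submodule F L) ⊔ (A : Submodule F L) := by
  refine le_antisymm ?_ (sup_le
    (fun x hx => le_sup_left (a := B) (b := A) hx)
    (fun x hx => le_sup_right (a := B) (b := A) hx))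
  have hlie : ∀ x y : L, x ∈ (B : Submodule F L) ⊔ (A : Submodule F L) →
      y ∈ (B : Submodule F L) ⊔ (A : Submodule F L) →
      ⁅x, y⁆ ∈ (B : Submodule F L) ⊔ (A : Submodule F L) := by
    intro x y hx hy
    obtain ⟨b, hb, a, ha, rfl⟩ := Submodule.mem_sup.1 hx
    obtain ⟨b', hb', a', ha', rfl⟩ := Submodule.mem_sup.1 hy
    have heq : ⁅b + a, b' + a'⁆ = ⁅b, b'⁆ + (⁅b, a'⁆ + (⁅a, b'⁆ + ⁅a, a'⁆)) := by
      simp only [lie_add, add_lie]; abel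
    rw [heq]
    refine Submodule.mem_sup.2 ⟨⁅b, b'⁆, B.lie_mem hb hb',
      ⁅b, a'⁆ + (⁅a, b'⁆ + ⁅a, a'⁆), ?_, rfl⟩
    exact A.toSubmodule.add_mem (hA b a' ha')
      (A.toSubmodule.add_mem (by rw [← lie_skew]; exact A.toSubmodule.neg_mem (hA b' a ha))
        (hA a a' ha'))
  set S : LieSubalgebra F L :=
    { toSubmodule := (B : Submodule F L) ⊔ (A : Submodule F L)
      lie_mem' := fun hx hy => hlie _ _ hx hy } with hS
  have h1 : B ⊔ A ≤ S := sup_le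
    (fun x hx => Submodule.mem_sup.2 ⟨x, hx, 0, A.toSubmodule.zero_mem, add_zero x⟩)
    (fun x hx => Submodule.mem_sup.2 ⟨0, B.toSubmodule.zero_mem, x, hx, zero_add x⟩)
  exact fun x hx => h1 hx

lemma max_inf_eq [LieAlgebra.IsSolvable L] {A : ℕ → LieSubalgebra F L} {n : ℕ}
    (hA : Paper.IsChiefSeries A n) {i : ℕ} (hi : i < n) {M : LieSubalgebra F L}
    (hco : IsCoatom M) (hAiM : A i ≤ M) (hnle : ¬ A (i + 1) ≤ M) :
    M ⊓ A (i + 1) = A i := by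
  obtain ⟨h0, hn, hideal, hstep⟩ := hA
  have hle : A i ≤ A (i + 1) := (hstep i hi).1.le
  have hsup : M ⊔ A (i + 1) = ⊤ := by
    refine hco.2 (M ⊔ A (i + 1)) (lt_of_le_of_ne le_sup_left ?_)
    intro h
    exact hnle (h ▸ le_sup_right)
  have htop : (M : Submodule F L) ⊔ (A (i + 1) : Submodule F L) = ⊤ := by
    rw [← sup_coe_submodule_of_ideal M (hideal (i + 1)), hsup,
      LieSubalgebra.top_toSubmodule]
  have habel := chief_abelian ⟨h0, hn, hideal, hstep⟩ hi
  have hKideal : Paper.IsIdealSubalg (M ⊓ A (i + 1)) := by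
    intro x k hk
    rw [LieSubalgebra.mem_inf] at hk
    have hxmem : x ∈ (M : Submodule F L) ⊔ (A (i + 1) : Submodule F L) := by
      rw [htop]; trivial
    obtain ⟨m, hm, a, ha, rfl⟩ := Submodule.mem_sup.1 hxmem
    have h1 : ⁅m, k⁆ ∈ M ⊓ A (i + 1) :=
      (LieSubalgebra.mem_inf _ _ _).2 ⟨M.lie_mem hm hk.1, hideal (i + 1) m k hk.2⟩
    have h2 : ⁅a, k⁆ ∈ M ⊓ A (i + 1) := by
      have := habel a ha k hk.2
      exact (LieSubalgebra.mem_inf _ _ _).2 ⟨hAiM this, hle this⟩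
    have : ⁅m + a, k⁆ = ⁅m, k⁆ + ⁅a, k⁆ := add_lie m a k
    rw [this]
    exact (M ⊓ A (i + 1)).add_mem h1 h2
  rcases (hstep i hi).2 (M ⊓ A (i + 1)) hKideal (le_inf hAiM hle) inf_le_right with h | h
  · exact h
  · exact absurd (h ▸ (inf_le_left : M ⊓ A (i + 1) ≤ M)) hnle

/-- Lower bound for the dimension of a finite intersection of subalgebras. -/
lemma finrank_biInf_ge [FiniteDimensional F L] (M : ℕ → LieSubalgebra F L) (t : Finset ℕ) :
    Module.finrank F L + ∑ i ∈ t, Module.finrank F ((M i : Submodule F L)) ≤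
      Module.finrank F (((⨅ i ∈ t, M i : LieSubalgebra F L) : Submodule F L)) +
        t.card * Module.finrank F L := by
  classical
  induction t using Finset.induction with
  | empty =>
      have h : (⨅ i ∈ (∅ : Finset ℕ), M i : LieSubalgebra F L) = ⊤ := by simp
      rw [h, LieSubalgebra.top_toSubmodule]
      simp [finrank_top]
  | @insert a t ha ih =>
      rw [Finset.sum_insert ha, Finset.card_insert_of_notMem ha, Nat.succ_mul,
        Finset.iInf_insert, LieSubalgebra.inf_toSubmodule]
      set X := (((⨅ i ∈ t, M i : LieSubalgebra F L)) : Submodule F L) with hX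
      have h1 := Submodule.finrank_sup_add_finrank_inf_eq ((M a : Submodule F L)) X
      have h2 : Module.finrank F ↥((M a : Submodule F L) ⊔ X) ≤ Module.finrank F L :=
        Submodule.finrank_le _
      generalize t.card * Module.finrank F L = q at ih ⊢
      omega

lemma finrank_inf_step [FiniteDimensional F L] {B X Y : Submodule F L} (h : Y ≤ X) :
    Module.finrank F ↥(B ⊓ X) + Module.finrank F ↥Y ≤
      Module.finrank F ↥(B ⊓ Y) + Module.finrank F ↥X := by
  have h1 := Submodule.finrank_sup_add_finrank_inf_eq (B ⊓ X) Y
  rw [inf_assoc, inf_eq_right.2 h] at h1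
  have h2 : Module.finrank F ↥((B ⊓ X) ⊔ Y) ≤ Module.finrank F ↥X :=
    Submodule.finrank_mono (sup_le inf_le_right h)
  omega

end PFAux

theorem stmt10 {F : Type*} [Field F] {L : Type*} [LieRing L] [LieAlgebra F L]
    [LieAlgebra.IsSolvable L] [FiniteDimensional F L]
    (U : LieSubalgebra F L) (n : ℕ) (A : ℕ → LieSubalgebra F L)
    (hA : Paper.IsChiefSeries A n) (B : LieSubalgebra F L)
    (hB : Paper.IsPrefrattiniWrt U A n B) :
    ∀ i < n,
      (Paper.IsUFrattiniFactor U (A i) (A (i + 1)) → B ⊔ A (i + 1) = B ⊔ A i) ∧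
      (¬ Paper.IsUFrattiniFactor U (A i) (A (i + 1)) → B ⊓ A (i + 1) = B ⊓ A i) := by
  classical
  obtain ⟨M, hM, hBdef⟩ := hB
  obtain ⟨h0, hn, hideal, hstep⟩ := id hA
  set p : ℕ → Prop := fun i => ¬ Paper.IsUFrattiniFactor U (A i) (A (i + 1)) with hp
  set t : Finset ℕ := (Finset.range n).filter p with ht
  set tc : Finset ℕ := (Finset.range n).filter (fun i => ¬ p i) with htc
  have hmemt : ∀ i, i ∈ t ↔ (i < n ∧ p i) := by
    intro i; rw [ht, Finset.mem_filter, Finset.mem_range]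
  have hBle : ∀ i, i < n → p i → B ≤ M i := by
    intro i hi hf
    rw [hBdef]
    exact iInf₂_le i (show i ∈ {i | i < n ∧ p i} from ⟨hi, hf⟩)
  -- avoidance
  have havoid : ∀ i, i < n → p i → B ⊓ A (i + 1) = B ⊓ A i := by
    intro i hi hf
    obtain ⟨hco, hUAi, hnle⟩ := hM i hi hf
    have hK := PFAux.max_inf_eq hA hi hco (le_trans le_sup_right hUAi) hnle
    refine le_antisymm (le_inf inf_le_left ?_) (inf_le_inf_left B (hstep i hi).1.le)
    calc B ⊓ A (i + 1) ≤ M i ⊓ A (i + 1) := inf_le_inf_right _ (hBle i hi hf)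
      _ ≤ A i := le_of_eq hK
  -- dimension bookkeeping
  set dL : ℕ := Module.finrank F L with hdL
  set RB : ℕ := Module.finrank F ↥(B : Submodule F L) with hRB
  set f : ℕ → ℕ := fun i => Module.finrank F ↥((B : Submodule F L) ⊓ (A i : Submodule F L))
    with hf
  set g : ℕ → ℕ := fun i => Module.finrank F ↥((A i : Submodule F L)) with hg
  set fd : ℕ → ℕ := fun i => f (i + 1) - f i with hfdd
  set gd : ℕ → ℕ := fun i => g (i + 1) - g i with hgdd
  have hAle : ∀ i, i < n → (A i : Submodule F L) ≤ (A (i + 1) : Submodule F L) :=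
    fun i hi x hx => (hstep i hi).1.le hx
  have hfmono : ∀ i, i < n → f i ≤ f (i + 1) :=
    fun i hi => Submodule.finrank_mono (inf_le_inf_left _ (hAle i hi))
  have hgmono : ∀ i, i < n → g i ≤ g (i + 1) :=
    fun i hi => Submodule.finrank_mono (hAle i hi)
  have hfsucc : ∀ i, i < n → f (i + 1) = f i + fd i :=
    fun i hi => (Nat.add_sub_cancel' (hfmono i hi)).symm
  have hgsucc : ∀ i, i < n → g (i + 1) = g i + gd i :=
    fun i hi => (Nat.add_sub_cancel' (hgmono i hi)).symm
  have hf0 : f 0 = 0 := by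
    show Module.finrank F ↥((B : Submodule F L) ⊓ (A 0 : Submodule F L)) = 0
    rw [h0, LieSubalgebra.bot_toSubmodule, inf_bot_eq, finrank_bot]
  have hg0 : g 0 = 0 := by
    show Module.finrank F ↥((A 0 : Submodule F L)) = 0
    rw [h0, LieSubalgebra.bot_toSubmodule, finrank_bot]
  have hfn : f n = RB := by
    show Module.finrank F ↥((B : Submodule F L) ⊓ (A n : Submodule F L)) = RB
    rw [hn, LieSubalgebra.top_toSubmodule, inf_top_eq]
  have hgn : g n = dL := by
    show Module.finrank F ↥((A n : Submodule F L)) = dL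
    rw [hn, LieSubalgebra.top_toSubmodule]
    exact finrank_top F L
  have htelf : ∀ m, m ≤ n → f m = ∑ i ∈ Finset.range m, fd i := by
    intro m
    induction m with
    | zero => intro _; simpa using hf0
    | succ m ih =>
        intro hm
        have hm' : m < n := hm
        rw [Finset.sum_range_succ, ← ih hm'.le, ← hfsucc m hm']
  have htelg : ∀ m, m ≤ n → g m = ∑ i ∈ Finset.range m, gd i := by
    intro m
    induction m with
    | zero => intro _; simpa using hg0
    | succ m ih =>
        intro hm
        have hm' : m < n := hm
        rw [Finset.sum_range_succ, ← ih hm'.le, ← hgsucc m hm']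
  have hfdgd : ∀ i, i < n → fd i ≤ gd i := by
    intro i hi
    have h : f (i + 1) + g i ≤ f i + g (i + 1) :=
      PFAux.finrank_inf_step (B := (B : Submodule F L)) (hAle i hi)
    have e1 := hfsucc i hi
    have e2 := hgsucc i hi
    omega
  have hfd0 : ∀ i ∈ t, fd i = 0 := by
    intro i hit
    obtain ⟨hi, hpi⟩ := (hmemt i).1 hit
    have hsub : ((B ⊓ A (i + 1) : LieSubalgebra F L) : Submodule F L) =
        ((B ⊓ A i : LieSubalgebra F L) : Submodule F L) := by rw [havoid i hi hpi]
    rw [LieSubalgebra.inf_toSubmodule, LieSubalgebra.inf_toSubmodule] at hsub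
    have hfi : f (i + 1) = f i := congrArg (fun q : Submodule F L => Module.finrank F ↥q) hsub
    show f (i + 1) - f i = 0
    omega
  -- lower bound via the maximal subalgebras
  have hrM : ∀ i ∈ t, Module.finrank F ↥((M i : Submodule F L)) + g (i + 1) = dL + g i := by
    intro i hit
    obtain ⟨hi, hpi⟩ := (hmemt i).1 hit
    obtain ⟨hco, hUAi, hnle⟩ := hM i hi hpi
    have hK := PFAux.max_inf_eq hA hi hco (le_trans le_sup_right hUAi) hnle
    have hsuptop : M i ⊔ A (i + 1) = ⊤ :=
      hco.2 _ (lt_of_le_of_ne le_sup_left (fun h => hnle (h ▸ le_sup_right)))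
    have htop : (M i : Submodule F L) ⊔ (A (i + 1) : Submodule F L) = ⊤ := by
      rw [← PFAux.sup_coe_submodule_of_ideal (M i) (hideal (i + 1)), hsuptop,
        LieSubalgebra.top_toSubmodule]
    have hinf : (M i : Submodule F L) ⊓ (A (i + 1) : Submodule F L) = (A i : Submodule F L) := by
      rw [← LieSubalgebra.inf_toSubmodule, hK]
    have h1 := Submodule.finrank_sup_add_finrank_inf_eq (M i : Submodule F L)
      (A (i + 1) : Submodule F L)
    rw [htop, hinf] at h1
    have h2 : Module.finrank F (⊤ : Submodule F L) = Module.finrank F L := finrank_top F L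
    show Module.finrank F ↥((M i : Submodule F L)) +
        Module.finrank F ↥((A (i + 1) : Submodule F L)) =
      Module.finrank F L + Module.finrank F ↥((A i : Submodule F L))
    omega
  have hBt : B = ⨅ i ∈ t, M i := by
    rw [hBdef]
    apply le_antisymm
    · refine le_iInf₂ fun i (hi : i ∈ t) => ?_
      exact iInf₂_le i (show i ∈ {i | i < n ∧ p i} from (hmemt i).1 hi)
    · refine le_iInf₂ fun i (hi : i ∈ {i | i < n ∧ p i}) => ?_
      exact iInf₂_le i ((hmemt i).2 hi)
  have hlow := PFAux.finrank_biInf_ge M t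
  rw [← hBt] at hlow
  -- `hlow : dL + ∑ i ∈ t, finrank (M i) ≤ RB + t.card * dL`
  have hsum2 : ∑ i ∈ t, Module.finrank F ↥((M i : Submodule F L)) + ∑ i ∈ t, g (i + 1) =
      t.card * dL + ∑ i ∈ t, g i := by
    calc ∑ i ∈ t, Module.finrank F ↥((M i : Submodule F L)) + ∑ i ∈ t, g (i + 1)
        = ∑ i ∈ t, (Module.finrank F ↥((M i : Submodule F L)) + g (i + 1)) :=
          Finset.sum_add_distrib.symm
      _ = ∑ i ∈ t, (dL + g i) := Finset.sum_congr rfl hrM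
      _ = t.card * dL + ∑ i ∈ t, g i := by
          rw [Finset.sum_add_distrib, Finset.sum_const, smul_eq_mul]
  have hsum3 : ∑ i ∈ t, g (i + 1) = ∑ i ∈ t, g i + ∑ i ∈ t, gd i := by
    rw [← Finset.sum_add_distrib]
    exact Finset.sum_congr rfl fun i hit => hgsucc i ((hmemt i).1 hit).1
  have hmain1 : dL ≤ RB + ∑ i ∈ t, gd i := by
    generalize t.card * dL = Q at hlow hsum2
    omega
  -- upper bound and comparison
  have hsplitf : ∑ i ∈ t, fd i + ∑ i ∈ tc, fd i = ∑ i ∈ Finset.range n, fd i :=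
    Finset.sum_filter_add_sum_filter_not _ _ _
  have hsplitg : ∑ i ∈ t, gd i + ∑ i ∈ tc, gd i = ∑ i ∈ Finset.range n, gd i :=
    Finset.sum_filter_add_sum_filter_not _ _ _
  have hRBsum : RB = ∑ i ∈ Finset.range n, fd i := by rw [← hfn]; exact htelf n le_rfl
  have hdLsum : dL = ∑ i ∈ Finset.range n, gd i := by rw [← hgn]; exact htelg n le_rfl
  have ht0 : ∑ i ∈ t, fd i = 0 := Finset.sum_eq_zero hfd0
  have hpt : ∀ i ∈ tc, fd i ≤ gd i := fun i hit =>
    hfdgd i (Finset.mem_range.1 (Finset.mem_filter.1 hit).1)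
  have hge : ∑ i ∈ tc, gd i ≤ ∑ i ∈ tc, fd i := by omega
  have hall : ∀ i ∈ tc, fd i = gd i :=
    (Finset.sum_eq_sum_iff_of_le hpt).1 (le_antisymm (Finset.sum_le_sum hpt) hge)
  -- conclusion
  intro i hi
  refine ⟨?_, fun hnf => havoid i hi hnf⟩
  intro hfrat
  have hitc : i ∈ tc := Finset.mem_filter.2 ⟨Finset.mem_range.2 hi, not_not_intro hfrat⟩
  have hEq : fd i = gd i := hall i hitc
  have e1 := hfsucc i hi
  have e2 := hgsucc i hi
  have s1 : Module.finrank F ↥((B : Submodule F L) ⊔ (A (i + 1) : Submodule F L)) + f (i + 1) =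
      RB + g (i + 1) :=
    Submodule.finrank_sup_add_finrank_inf_eq (B : Submodule F L) (A (i + 1) : Submodule F L)
  have s0 : Module.finrank F ↥((B : Submodule F L) ⊔ (A i : Submodule F L)) + f i =
      RB + g i :=
    Submodule.finrank_sup_add_finrank_inf_eq (B : Submodule F L) (A i : Submodule F L)
  have hle' : (B : Submodule F L) ⊔ (A i : Submodule F L) ≤
      (B : Submodule F L) ⊔ (A (i + 1) : Submodule F L) := sup_le_sup_left (hAle i hi) _
  have hr10 : Module.finrank F ↥((B : Submodule F L) ⊔ (A (i + 1) : Submodule F L)) ≤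
      Module.finrank F ↥((B : Submodule F L) ⊔ (A i : Submodule F L)) := by omega
  have heqsub : (B : Submodule F L) ⊔ (A i : Submodule F L) =
      (B : Submodule F L) ⊔ (A (i + 1) : Submodule F L) :=
    Submodule.eq_of_le_of_finrank_le hle' hr10
  apply LieSubalgebra.toSubmodule_injective
  rw [PFAux.sup_coe_submodule_of_ideal B (hideal (i + 1)),
    PFAux.sup_coe_submodule_of_ideal B (hideal i)]
  exact heqsub.symm
end
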